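/- Every simple graph with n vertices and maximum degree 3 has at most 2^{u/4} · C Hamiltonian cycles for some absolute constant C, where u is the number of edges of G not contained in a given set F of edges that every Hamiltonian cycle must contain; in particular, taking F = ∅ and u ≤ 3n/2, the number of Hamiltonian cycles is O(2^{3n/8}). -/

import Mathlib

namespace Stmt12
open Finset
attribute [local instance] Classical.propDecidable
set_option linter.unusedSectionVars false
set_option maxHeartbeats 1000000

noncomputable section

def bb : ℝ := (2 : ℝ) ^ ((4 : ℝ)⁻¹)

lemma bb_pos : 0 < bb := Real.rpow_pos_of_pos (by norm_num) _

lemma bb_pow_four : bb ^ (4:ℕ) = 2 := by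
  rw [bb, ← Real.rpow_natCast ((2:ℝ) ^ ((4:ℝ)⁻¹)) 4, ← Real.rpow_mul (by norm_num)]
  norm_num

lemma one_le_bb : 1 ≤ bb := by
  by_contra h
  push_neg at h
  have h4 : bb ^ (4:ℕ) < 1 := pow_lt_one₀ bb_pos.le h (by norm_num)
  rw [bb_pow_four] at h4; norm_num at h4

lemma bb_le : bb ≤ 6/5 := by
  have h : bb ^ (4:ℕ) ≤ (6/5 : ℝ) ^ (4:ℕ) := by rw [bb_pow_four]; norm_num
  exact le_of_pow_le_pow_left₀ (by norm_num) (by norm_num) h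

lemma key36 : bb ^ (3:ℕ) + 1 ≤ bb ^ (6:ℕ) := by
  have h4 := bb_pow_four
  have h1 := one_le_bb
  have h2 := bb_le
  nlinarith [sq_nonneg bb, sq_nonneg (bb - 1), sq_nonneg (bb*bb - bb), mul_pos bb_pos bb_pos]

lemma key55 : (2:ℝ) ≤ bb ^ (5:ℕ) := by
  have h4 := bb_pow_four
  have h1 := one_le_bb
  nlinarith

lemma key46 : bb ^ (2:ℕ) + 1 ≤ bb ^ (6:ℕ) := by
  have h4 := bb_pow_four
  have h1 := one_le_bb
  nlinarith

lemma bb_mono {a b : ℕ} (h : a ≤ b) : bb ^ a ≤ bb ^ b := pow_le_pow_right₀ one_le_bb h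


variable {V : Type*} [Fintype V] [DecidableEq V]

/-- edges of `A` incident to `v` -/
def eAt (A : Finset (Sym2 V)) (v : V) : Finset (Sym2 V) := A.filter (fun e => v ∈ e)

lemma mem_eAt {A : Finset (Sym2 V)} {v : V} {e : Sym2 V} :
    e ∈ eAt A v ↔ e ∈ A ∧ v ∈ e := Finset.mem_filter

/-- abstract "edge set of a Hamiltonian cycle" properties -/
def good (E : Finset (Sym2 V)) (C : Finset (Sym2 V)) : Prop :=
  C ⊆ E ∧ (∀ v, (eAt C v).card = 2) ∧
    ∀ S ⊆ C, S.Nonempty →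
      (∀ v, (eAt S v).card = 0 ∨ (eAt S v).card = 2) → S = C

def Fam (E F X : Finset (Sym2 V)) : Finset (Finset (Sym2 V)) :=
  Finset.univ.filter fun C => good E C ∧ F ⊆ C ∧ Disjoint C X

lemma mem_Fam {E F X C : Finset (Sym2 V)} :
    C ∈ Fam E F X ↔ good E C ∧ F ⊆ C ∧ Disjoint C X := by
  simp [Fam]

def avail (E X : Finset (Sym2 V)) (v : V) : Finset (Sym2 V) := eAt (E \ X) v

lemma mem_avail {E X : Finset (Sym2 V)} {v : V} {e : Sym2 V} :
    e ∈ avail E X v ↔ e ∈ E ∧ e ∉ X ∧ v ∈ e := by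
  simp [avail, mem_eAt, Finset.mem_sdiff, and_assoc]

section workhorse

variable {E F X C : Finset (Sym2 V)} {v : V}

lemma eAt_subset_avail (hCE : C ⊆ E) (hCX : Disjoint C X) (v : V) :
    eAt C v ⊆ avail E X v := by
  intro e he
  rw [mem_eAt] at he
  exact mem_avail.2 ⟨hCE he.1, Finset.disjoint_left.1 hCX he.1, he.2⟩

lemma avail_subset_eAt (X : Finset (Sym2 V)) (v : V) : avail E X v ⊆ eAt E v := by
  intro e he; rw [mem_avail] at he; exact mem_eAt.2 ⟨he.1, he.2.2⟩

/-- W1': if available edges at `v` are within `{a,b,c}` and `c ∉ C`, then `a, b ∈ C`. -/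
lemma force_pair (hC : good E C) (hCX : Disjoint C X) {a b c : Sym2 V}
    (hsub : avail E X v ⊆ {a, b, c}) (hc : c ∉ C) : a ∈ C ∧ b ∈ C := by
  have hT : eAt C v ⊆ ({a, b} : Finset (Sym2 V)) := by
    intro e he
    have := hsub (eAt_subset_avail hC.1 hCX v he)
    simp only [Finset.mem_insert, Finset.mem_singleton] at this ⊢
    rcases this with h | h | h
    · exact Or.inl h
    · exact Or.inr h
    · exact absurd (h ▸ (mem_eAt.1 he).1) hc
  have hcard : ({a, b} : Finset (Sym2 V)).card ≤ (eAt C v).card := by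
    rw [hC.2.1 v]; exact le_trans (Finset.card_insert_le _ _) (by simp)
  have heq := Finset.eq_of_subset_of_card_le hT hcard
  constructor
  · exact (mem_eAt.1 (heq ▸ (by simp : a ∈ ({a,b}:Finset (Sym2 V))))).1
  · exact (mem_eAt.1 (heq ▸ (by simp : b ∈ ({a,b}:Finset (Sym2 V))))).1

/-- W1: if available edges at `v` are within `{a,b}`, then `a, b ∈ C`. -/
lemma force_pair' (hC : good E C) (hCX : Disjoint C X) {a b : Sym2 V}
    (hsub : avail E X v ⊆ {a, b}) : a ∈ C ∧ b ∈ C := by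
  have hT : eAt C v ⊆ ({a, b} : Finset (Sym2 V)) :=
    fun e he => hsub (eAt_subset_avail hC.1 hCX v he)
  have hcard : ({a, b} : Finset (Sym2 V)).card ≤ (eAt C v).card := by
    rw [hC.2.1 v]; exact le_trans (Finset.card_insert_le _ _) (by simp)
  have heq := Finset.eq_of_subset_of_card_le hT hcard
  constructor
  · exact (mem_eAt.1 (heq ▸ (by simp : a ∈ ({a,b}:Finset (Sym2 V))))).1
  · exact (mem_eAt.1 (heq ▸ (by simp : b ∈ ({a,b}:Finset (Sym2 V))))).1

/-- W2: two distinct incident edges in `C` exclude any third. -/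
lemma exclude_third (hC : good E C) {a b c : Sym2 V}
    (ha : a ∈ C) (hb : b ∈ C) (hab : a ≠ b) (hva : v ∈ a) (hvb : v ∈ b)
    (hvc : v ∈ c) (hca : c ≠ a) (hcb : c ≠ b) : c ∉ C := by
  intro hcC
  have hsub : ({c, a, b} : Finset (Sym2 V)) ⊆ eAt C v := by
    intro e he
    simp only [Finset.mem_insert, Finset.mem_singleton] at he
    rcases he with rfl | rfl | rfl <;> exact mem_eAt.2 ⟨by assumption, by assumption⟩
  have : ({c, a, b} : Finset (Sym2 V)).card = 3 := by
    rw [Finset.card_insert_of_notMem (by simp [hca, hcb]),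
      Finset.card_insert_of_notMem (by simp [hab]), Finset.card_singleton]
  have hle := Finset.card_le_card hsub
  rw [this, hC.2.1 v] at hle
  omega

/-- W3: splitting at a `b1` vertex. -/
lemma split_pair (hC : good E C) (hCX : Disjoint C X) {f a b : Sym2 V}
    (hsub : avail E X v ⊆ {f, a, b}) (hfC : f ∈ C)
    (hvf : v ∈ f) (hva : v ∈ a) (hvb : v ∈ b)
    (hfa : f ≠ a) (hfb : f ≠ b) (hab : a ≠ b) :
    (a ∈ C ∧ b ∉ C) ∨ (b ∈ C ∧ a ∉ C) := by
  by_cases ha : a ∈ C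
  · exact Or.inl ⟨ha, exclude_third hC hfC ha hfa hvf hva hvb (Ne.symm hfb) (Ne.symm hab)⟩
  · have hsub' : avail E X v ⊆ {f, b, a} := by
      intro e he; have := hsub he
      simp only [Finset.mem_insert, Finset.mem_singleton] at this ⊢; tauto
    have := force_pair hC hCX hsub' ha
    exact Or.inr ⟨this.2, ha⟩

/-- cardinality ≥ 2 of available edges at any vertex, given a good C avoiding X -/
lemma two_le_avail (hC : good E C) (hCX : Disjoint C X) (v : V) :
    2 ≤ (avail E X v).card := by
  have := Finset.card_le_card (eAt_subset_avail hC.1 hCX v)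
  rw [hC.2.1 v] at this; exact this

end workhorse

section sym2helpers

variable {E : Finset (Sym2 V)}

lemma other_endpoint (hE : ∀ e ∈ E, ¬ e.IsDiag) {e : Sym2 V} {v : V}
    (he : e ∈ E) (hv : v ∈ e) : ∃ w, w ≠ v ∧ e = s(v, w) := by
  induction e using Sym2.ind with
  | _ x y =>
    have hd := hE _ he
    rw [Sym2.mk_isDiag_iff] at hd
    rw [Sym2.mem_iff] at hv
    rcases hv with rfl | rfl
    · exact ⟨y, fun h => hd h.symm, rfl⟩
    · exact ⟨x, hd, Sym2.eq_swap⟩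

lemma eq_mk_of_mem {e : Sym2 V} {a b : V} (ha : a ∈ e) (hb : b ∈ e) (hab : a ≠ b) :
    e = s(a, b) := by
  induction e using Sym2.ind with
  | _ x y =>
    rw [Sym2.mem_iff] at ha hb
    rcases ha with rfl | rfl <;> rcases hb with rfl | rfl
    · exact absurd rfl hab
    · rfl
    · exact Sym2.eq_swap
    · exact absurd rfl hab

lemma mk_ne_of_not_mem {a b c : V} {e : Sym2 V} (hc : c ∈ e) (hca : c ≠ a) (hcb : c ≠ b) :
    e ≠ s(a, b) := by
  rintro rfl
  rw [Sym2.mem_iff] at hc; tauto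

end sym2helpers

section cardinality

variable {E F X : Finset (Sym2 V)}

/-- drop bound: if `D` consists of unresolved edges that become resolved, the new
unresolved count drops by `|D|`. -/
lemma drop_bound {F' X' D : Finset (Sym2 V)}
    (hD : D ⊆ E \ (F ∪ X)) (hD' : D ⊆ F' ∪ X') (hFX : F ∪ X ⊆ F' ∪ X') :
    (E \ (F' ∪ X')).card + D.card ≤ (E \ (F ∪ X)).card := by
  have hdisj : Disjoint (E \ (F' ∪ X')) D := by
    rw [Finset.disjoint_right]
    intro e he
    simp only [Finset.mem_sdiff, not_and, not_not]
    intro _; exact hD' (by exact he)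
  have hsub : (E \ (F' ∪ X')) ∪ D ⊆ E \ (F ∪ X) := by
    refine Finset.union_subset (fun e he => ?_) hD
    rw [Finset.mem_sdiff] at he ⊢
    exact ⟨he.1, fun h => he.2 (hFX h)⟩
  calc (E \ (F' ∪ X')).card + D.card = ((E \ (F' ∪ X')) ∪ D).card :=
        (Finset.card_union_of_disjoint hdisj).symm
    _ ≤ _ := Finset.card_le_card hsub

lemma Fam_mono {F' X' : Finset (Sym2 V)}
    (h : ∀ C ∈ Fam E F X, C ∈ Fam E F' X') :
    (Fam E F X).card ≤ (Fam E F' X').card :=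
  Finset.card_le_card fun C hC => h C hC

lemma Fam_split {F₁ X₁ F₂ X₂ : Finset (Sym2 V)}
    (h : ∀ C ∈ Fam E F X, C ∈ Fam E F₁ X₁ ∨ C ∈ Fam E F₂ X₂) :
    (Fam E F X).card ≤ (Fam E F₁ X₁).card + (Fam E F₂ X₂).card := by
  calc (Fam E F X).card ≤ (Fam E F₁ X₁ ∪ Fam E F₂ X₂).card := by
        apply Finset.card_le_card
        intro C hC
        rw [Finset.mem_union]; exact h C hC
    _ ≤ _ := Finset.card_union_le _ _

lemma Fam_split3 {F₁ X₁ F₂ X₂ F₃ X₃ : Finset (Sym2 V)}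
    (h : ∀ C ∈ Fam E F X, C ∈ Fam E F₁ X₁ ∨ C ∈ Fam E F₂ X₂ ∨ C ∈ Fam E F₃ X₃) :
    (Fam E F X).card ≤ (Fam E F₁ X₁).card + (Fam E F₂ X₂).card + (Fam E F₃ X₃).card := by
  calc (Fam E F X).card ≤ ((Fam E F₁ X₁ ∪ Fam E F₂ X₂) ∪ Fam E F₃ X₃).card := by
        apply Finset.card_le_card
        intro C hC
        simp only [Finset.mem_union]
        rcases h C hC with h | h | h <;> tauto
    _ ≤ (Fam E F₁ X₁ ∪ Fam E F₂ X₂).card + (Fam E F₃ X₃).card := Finset.card_union_le _ _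
    _ ≤ _ := by
        have := Finset.card_union_le (Fam E F₁ X₁) (Fam E F₂ X₂)
        omega

lemma disjoint_aug {C S : Finset (Sym2 V)} (hCX : Disjoint C X)
    (hS : ∀ e ∈ S, e ∉ C) : Disjoint C (X ∪ S) := by
  rw [Finset.disjoint_union_right]
  exact ⟨hCX, Finset.disjoint_right.2 hS⟩

end cardinality

section structure_lemmas

variable {E F X : Finset (Sym2 V)}

lemma avail3_structure {w : V} (h3 : (avail E X w).card = 3) {a b : Sym2 V}
    (ha : a ∈ avail E X w) (hb : b ∈ avail E X w) (hab : a ≠ b) :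
    ∃ c, c ∉ ({a, b} : Finset (Sym2 V)) ∧ c ∈ avail E X w ∧
      avail E X w = {a, b, c} := by
  have hsub : ({a, b} : Finset (Sym2 V)) ⊆ avail E X w := by
    intro e he; simp only [Finset.mem_insert, Finset.mem_singleton] at he
    rcases he with rfl | rfl <;> assumption
  have hc2 : ({a, b} : Finset (Sym2 V)).card = 2 := Finset.card_pair hab
  have hcard : (avail E X w \ {a, b}).card = 1 := by
    rw [Finset.card_sdiff_of_subset hsub, h3, hc2]
  obtain ⟨c, hc⟩ := Finset.card_eq_one.1 hcard
  have hcmem : c ∈ avail E X w \ {a, b} := hc ▸ Finset.mem_singleton_self c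
  rw [Finset.mem_sdiff] at hcmem
  refine ⟨c, hcmem.2, hcmem.1, ?_⟩
  have : ({a, b} : Finset (Sym2 V)) ∪ (avail E X w \ {a, b}) = avail E X w :=
    Finset.union_sdiff_of_subset hsub
  rw [hc] at this
  rw [← this]
  ext e
  simp only [Finset.mem_insert, Finset.mem_singleton, Finset.mem_union]
  try tauto

lemma avail3_structure1 {w : V} (h3 : (avail E X w).card = 3) {a : Sym2 V}
    (ha : a ∈ avail E X w) :
    ∃ p q, p ≠ q ∧ p ≠ a ∧ q ≠ a ∧ p ∈ avail E X w ∧ q ∈ avail E X w ∧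
      avail E X w = {a, p, q} := by
  have hsub : ({a} : Finset (Sym2 V)) ⊆ avail E X w := by simpa using ha
  have hcard : (avail E X w \ {a}).card = 2 := by
    rw [Finset.card_sdiff_of_subset hsub, h3]; rfl
  obtain ⟨p, q, hpq, hset⟩ := Finset.card_eq_two.1 hcard
  have hp : p ∈ avail E X w \ {a} := by rw [hset]; simp
  have hq : q ∈ avail E X w \ {a} := by rw [hset]; simp
  rw [Finset.mem_sdiff, Finset.mem_singleton] at hp hq
  refine ⟨p, q, hpq, hp.2, hq.2, hp.1, hq.1, ?_⟩
  have : ({a} : Finset (Sym2 V)) ∪ (avail E X w \ {a}) = avail E X w :=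
    Finset.union_sdiff_of_subset hsub
  rw [hset] at this
  rw [← this]
  ext e
  simp only [Finset.mem_insert, Finset.mem_singleton, Finset.mem_union]
  try tauto

lemma avail_v_cases {v : V} {f e1 e2 e : Sym2 V} (hav : avail E X v = {f, e1, e2})
    (heE : e ∈ E) (heX : e ∉ X) (hv : v ∈ e) : e = f ∨ e = e1 ∨ e = e2 := by
  have : e ∈ avail E X v := mem_avail.2 ⟨heE, heX, hv⟩
  rw [hav] at this; simpa using this

end structure_lemmas

/-- vertex types in a reduced state -/
def TA (E F X : Finset (Sym2 V)) (w : V) : Prop :=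
  (avail E X w).card = 2 ∧ avail E X w ⊆ F

def TB0 (E F X : Finset (Sym2 V)) (w : V) : Prop :=
  (avail E X w).card = 3 ∧ eAt F w = ∅

def TB1 (E F X : Finset (Sym2 V)) (w : V) : Prop :=
  (avail E X w).card = 3 ∧ (eAt F w).card = 1

section numeric

lemma key36' (a : ℕ) : bb ^ (a+3) + bb ^ a ≤ bb ^ (a+6) := by
  have h := mul_le_mul_of_nonneg_left key36 (pow_nonneg bb_pos.le a)
  calc bb ^ (a+3) + bb ^ a = bb ^ a * (bb ^ (3:ℕ) + 1) := by ring
    _ ≤ bb ^ a * bb ^ (6:ℕ) := by nlinarith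
    _ = bb ^ (a+6) := by ring

lemma key44' (a : ℕ) : bb ^ a + bb ^ a ≤ bb ^ (a+4) := by
  have h := bb_pow_four
  have : bb ^ a * 2 = bb ^ (a+4) := by rw [← h]; ring
  nlinarith [this]

lemma key55' (a : ℕ) : bb ^ a + bb ^ a ≤ bb ^ (a+5) := by
  have h := mul_le_mul_of_nonneg_left key55 (pow_nonneg bb_pos.le a)
  calc bb ^ a + bb ^ a = bb ^ a * 2 := by ring
    _ ≤ bb ^ a * bb ^ (5:ℕ) := by nlinarith
    _ = bb ^ (a+5) := by ring

lemma key46' (a : ℕ) : bb ^ (a+2) + bb ^ a ≤ bb ^ (a+6) := by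
  have h := mul_le_mul_of_nonneg_left key46 (pow_nonneg bb_pos.le a)
  calc bb ^ (a+2) + bb ^ a = bb ^ a * (bb ^ (2:ℕ) + 1) := by ring
    _ ≤ bb ^ a * bb ^ (6:ℕ) := by nlinarith
    _ = bb ^ (a+6) := by ring

lemma sum_le_two {u u1 u2 d1 d2 : ℕ} (h1 : u1 + d1 ≤ u) (h2 : u2 + d2 ≤ u)
    (hkey : ∀ a, bb ^ (a + (d2 - d1)) + bb ^ a ≤ bb ^ (a + d2)) (hd : d1 ≤ d2) :
    bb ^ u1 + bb ^ u2 ≤ bb ^ u := by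
  have e1 : u1 ≤ (u - d2) + (d2 - d1) := by omega
  have e2 : u2 ≤ u - d2 := by omega
  have e3 : (u - d2) + d2 = u := by omega
  calc bb ^ u1 + bb ^ u2 ≤ bb ^ ((u - d2) + (d2 - d1)) + bb ^ (u - d2) :=
        add_le_add (bb_mono e1) (bb_mono e2)
    _ ≤ bb ^ ((u - d2) + d2) := hkey _
    _ = bb ^ u := by rw [e3]

lemma sum_le_44 {u u1 u2 : ℕ} (h1 : u1 + 4 ≤ u) (h2 : u2 + 4 ≤ u) :
    bb ^ u1 + bb ^ u2 ≤ bb ^ u :=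
  sum_le_two h1 h2 (fun a => by simpa using key44' a) le_rfl

lemma sum_le_36 {u u1 u2 : ℕ} (h1 : u1 + 3 ≤ u) (h2 : u2 + 6 ≤ u) :
    bb ^ u1 + bb ^ u2 ≤ bb ^ u :=
  sum_le_two h1 h2 (fun a => by simpa using key36' a) (by norm_num)

lemma sum_le_55 {u u1 u2 : ℕ} (h1 : u1 + 5 ≤ u) (h2 : u2 + 5 ≤ u) :
    bb ^ u1 + bb ^ u2 ≤ bb ^ u :=
  sum_le_two h1 h2 (fun a => by simpa using key55' a) le_rfl

lemma sum_le_46 {u u1 u2 : ℕ} (h1 : u1 + 4 ≤ u) (h2 : u2 + 6 ≤ u) :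
    bb ^ u1 + bb ^ u2 ≤ bb ^ u :=
  sum_le_two h1 h2 (fun a => by simpa using key46' a) (by norm_num)

end numeric

/-- the inductive hypothesis shape -/
def IHtype (E : Finset (Sym2 V)) (u : ℕ) : Prop :=
  ∀ u' < u, ∀ F X : Finset (Sym2 V), (E \ (F ∪ X)).card ≤ u' →
    ((Fam E F X).card : ℝ) ≤ (if F = ∅ then (3:ℝ) else 1) * bb ^ u'

section branching

variable {E F X : Finset (Sym2 V)} {u : ℕ}

lemma ne_of_mem_not_mem {e e' : Sym2 V} {v : V} (h : v ∈ e) (h' : v ∉ e') : e ≠ e' :=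
  fun heq => h' (heq ▸ h)

lemma forced_aug {C F S : Finset (Sym2 V)} (hFC : F ⊆ C) (hS : ∀ e ∈ S, e ∈ C) :
    F ∪ S ⊆ C := Finset.union_subset hFC hS

lemma step_bound {F' X' D : Finset (Sym2 V)} (IH : IHtype E u)
    (hu : (E \ (F ∪ X)).card ≤ u)
    (hD : D ⊆ E \ (F ∪ X)) (hD' : D ⊆ F' ∪ X') (hFX : F ∪ X ⊆ F' ∪ X')
    {d : ℕ} (hd : d ≤ D.card) (hd1 : 1 ≤ d)
    (hF' : F'.Nonempty) :
    ((Fam E F' X').card : ℝ) ≤ bb ^ (u - d) := by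
  have h := drop_bound hD hD' hFX
  have hlt : (E \ (F' ∪ X')).card < u := by omega
  have hIH := IH _ hlt F' X' le_rfl
  rw [if_neg (Finset.nonempty_iff_ne_empty.1 hF'), one_mul] at hIH
  exact le_trans hIH (bb_mono (by omega))

/-- branching at a `b1` vertex whose two unforced edges both lead to `b0` vertices -/
lemma branch_00 (hE : ∀ e ∈ E, ¬ e.IsDiag) (IH : IHtype E u)
    (hu : (E \ (F ∪ X)).card ≤ u)
    (hFEX : ∀ e ∈ F, e ∈ E ∧ e ∉ X)
    {v w1 w2 : V} {f e1 e2 : Sym2 V}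
    (hFv : eAt F v = {f}) (hav : avail E X v = {f, e1, e2})
    (he1f : e1 ≠ f) (he2f : e2 ≠ f) (he12 : e1 ≠ e2)
    (he1 : e1 = s(v, w1)) (he2 : e2 = s(v, w2))
    (hw1v : w1 ≠ v) (hw2v : w2 ≠ v) (hw12 : w1 ≠ w2)
    (hw1 : TB0 E F X w1) (hw2 : TB0 E F X w2) :
    ((Fam E F X).card : ℝ) ≤ bb ^ u := by
  -- basics
  have hfF : f ∈ F := (mem_eAt.1 (by rw [hFv]; exact Finset.mem_singleton_self f)).1
  have hvf : v ∈ f := (mem_eAt.1 (by rw [hFv]; exact Finset.mem_singleton_self f)).2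
  have he1av : e1 ∈ avail E X v := by rw [hav]; simp
  have he2av : e2 ∈ avail E X v := by rw [hav]; simp
  obtain ⟨he1E, he1X, hve1⟩ := mem_avail.1 he1av
  obtain ⟨he2E, he2X, hve2⟩ := mem_avail.1 he2av
  have hw1e1 : w1 ∈ e1 := by rw [he1]; simp
  have hw2e2 : w2 ∈ e2 := by rw [he2]; simp
  have he1F : e1 ∉ F := fun h => he1f (by
    have : e1 ∈ eAt F v := mem_eAt.2 ⟨h, hve1⟩
    rwa [hFv, Finset.mem_singleton] at this)
  have he2F : e2 ∉ F := fun h => he2f (by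
    have : e2 ∈ eAt F v := mem_eAt.2 ⟨h, hve2⟩
    rwa [hFv, Finset.mem_singleton] at this)
  -- structure at w1, w2
  have he1w1 : e1 ∈ avail E X w1 := mem_avail.2 ⟨he1E, he1X, hw1e1⟩
  have he2w2 : e2 ∈ avail E X w2 := mem_avail.2 ⟨he2E, he2X, hw2e2⟩
  obtain ⟨p1, q1, hp1q1, hp1e1, hq1e1, hp1av, hq1av, havw1⟩ := avail3_structure1 hw1.1 he1w1
  obtain ⟨p2, q2, hp2q2, hp2e2, hq2e2, hp2av, hq2av, havw2⟩ := avail3_structure1 hw2.1 he2w2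
  obtain ⟨hp1E, hp1X, hw1p1⟩ := mem_avail.1 hp1av
  obtain ⟨hq1E, hq1X, hw1q1⟩ := mem_avail.1 hq1av
  obtain ⟨hp2E, hp2X, hw2p2⟩ := mem_avail.1 hp2av
  obtain ⟨hq2E, hq2X, hw2q2⟩ := mem_avail.1 hq2av
  have hnotF0 : ∀ e, w1 ∈ e → e ∉ F := by
    intro e hw he
    have hmem : e ∈ eAt F w1 := mem_eAt.2 ⟨he, hw⟩
    rw [hw1.2] at hmem
    exact Finset.notMem_empty e hmem
  have hnotF2 : ∀ e, w2 ∈ e → e ∉ F := by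
    intro e hw he
    have hmem : e ∈ eAt F w2 := mem_eAt.2 ⟨he, hw⟩
    rw [hw2.2] at hmem
    exact Finset.notMem_empty e hmem
  have hp1F : p1 ∉ F := hnotF0 p1 hw1p1
  have hq1F : q1 ∉ F := hnotF0 q1 hw1q1
  have hp2F : p2 ∉ F := hnotF2 p2 hw2p2
  have hq2F : q2 ∉ F := hnotF2 q2 hw2q2
  -- v not in p, q edges
  have hvnot : ∀ e ∈ avail E X w1, e ≠ e1 → e ∉ F → v ∉ e := by
    intro e hea hne heF hv
    obtain ⟨heE', heX', _⟩ := mem_avail.1 hea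
    rcases avail_v_cases hav heE' heX' hv with h | h | h
    · exact heF (h ▸ hfF)
    · exact hne h
    · have hw1e : w1 ∈ e := (mem_avail.1 hea).2.2
      rw [h, he2, Sym2.mem_iff] at hw1e
      tauto
  have hvnot2 : ∀ e ∈ avail E X w2, e ≠ e2 → e ∉ F → v ∉ e := by
    intro e hea hne heF hv
    obtain ⟨heE', heX', _⟩ := mem_avail.1 hea
    rcases avail_v_cases hav heE' heX' hv with h | h | h
    · exact heF (h ▸ hfF)
    · have hw2e : w2 ∈ e := (mem_avail.1 hea).2.2
      rw [h, he1, Sym2.mem_iff] at hw2e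
      tauto
    · exact hne h
  have hvp1 : v ∉ p1 := hvnot p1 hp1av hp1e1 hp1F
  have hvq1 : v ∉ q1 := hvnot q1 hq1av hq1e1 hq1F
  have hvp2 : v ∉ p2 := hvnot2 p2 hp2av hp2e2 hp2F
  have hvq2 : v ∉ q2 := hvnot2 q2 hq2av hq2e2 hq2F
  -- edge distinctness
  have he1p2 : e1 ≠ p2 := ne_of_mem_not_mem hve1 hvp2
  have he1q2 : e1 ≠ q2 := ne_of_mem_not_mem hve1 hvq2
  have he2p2 : e2 ≠ p2 := ne_of_mem_not_mem hve2 hvp2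
  have he2q2 : e2 ≠ q2 := ne_of_mem_not_mem hve2 hvq2
  have he1p1 : e1 ≠ p1 := ne_of_mem_not_mem hve1 hvp1
  have he1q1 : e1 ≠ q1 := ne_of_mem_not_mem hve1 hvq1
  have he2p1 : e2 ≠ p1 := ne_of_mem_not_mem hve2 hvp1
  have he2q1 : e2 ≠ q1 := ne_of_mem_not_mem hve2 hvq1
  -- the split
  have hpoint : ∀ C ∈ Fam E F X,
      C ∈ Fam E (F ∪ {e1, p2, q2}) (X ∪ {e2}) ∨
      C ∈ Fam E (F ∪ {e2, p1, q1}) (X ∪ {e1}) := by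
    intro C hC
    obtain ⟨hgood, hFC, hXC⟩ := mem_Fam.1 hC
    rcases split_pair hgood hXC (le_of_eq hav) (hFC hfF) hvf hve1 hve2
      (Ne.symm he1f) (Ne.symm he2f) he12 with ⟨h1, h2⟩ | ⟨h2, h1⟩
    · -- e1 ∈ C, e2 ∉ C
      left
      have hsub : avail E X w2 ⊆ {p2, q2, e2} := by
        rw [havw2]; intro e he; simp only [Finset.mem_insert, Finset.mem_singleton] at he ⊢
        tauto
      obtain ⟨hp2C, hq2C⟩ := force_pair hgood hXC hsub h2
      refine mem_Fam.2 ⟨hgood, forced_aug hFC ?_, disjoint_aug hXC ?_⟩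
      · intro e he
        simp only [Finset.mem_insert, Finset.mem_singleton] at he
        rcases he with rfl | rfl | rfl <;> assumption
      · intro e he
        rw [Finset.mem_singleton] at he
        subst he; exact h2
    · -- e2 ∈ C, e1 ∉ C
      right
      have hsub : avail E X w1 ⊆ {p1, q1, e1} := by
        rw [havw1]; intro e he; simp only [Finset.mem_insert, Finset.mem_singleton] at he ⊢
        tauto
      obtain ⟨hp1C, hq1C⟩ := force_pair hgood hXC hsub h1
      refine mem_Fam.2 ⟨hgood, forced_aug hFC ?_, disjoint_aug hXC ?_⟩
      · intro e he
        simp only [Finset.mem_insert, Finset.mem_singleton] at he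
        rcases he with rfl | rfl | rfl <;> assumption
      · intro e he
        rw [Finset.mem_singleton] at he
        subst he; exact h1
  -- drop sets
  have hD1 : ({e1, e2, p2, q2} : Finset (Sym2 V)) ⊆ E \ (F ∪ X) := by
    intro e he
    simp only [Finset.mem_insert, Finset.mem_singleton] at he
    rw [Finset.mem_sdiff, Finset.mem_union]
    rcases he with rfl | rfl | rfl | rfl <;> exact ⟨by assumption, by tauto⟩
  have hD2 : ({e2, e1, p1, q1} : Finset (Sym2 V)) ⊆ E \ (F ∪ X) := by
    intro e he
    simp only [Finset.mem_insert, Finset.mem_singleton] at he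
    rw [Finset.mem_sdiff, Finset.mem_union]
    rcases he with rfl | rfl | rfl | rfl <;> exact ⟨by assumption, by tauto⟩
  have hc1 : ({e1, e2, p2, q2} : Finset (Sym2 V)).card = 4 := by
    rw [Finset.card_insert_of_notMem (by simp [he12, he1p2, he1q2]),
      Finset.card_insert_of_notMem (by simp [he2p2, he2q2]),
      Finset.card_pair hp2q2]
  have hc2 : ({e2, e1, p1, q1} : Finset (Sym2 V)).card = 4 := by
    rw [Finset.card_insert_of_notMem (by simp [Ne.symm he12, he2p1, he2q1]),
      Finset.card_insert_of_notMem (by simp [he1p1, he1q1]),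
      Finset.card_pair hp1q1]
  have hs1 := step_bound (F' := F ∪ {e1, p2, q2}) (X' := X ∪ {e2}) IH hu hD1
    (by intro e he; simp only [Finset.mem_insert, Finset.mem_singleton] at he
        rw [Finset.mem_union, Finset.mem_union, Finset.mem_union]
        rcases he with rfl | rfl | rfl | rfl <;> simp)
    (by intro e he; rw [Finset.mem_union] at he
        rw [Finset.mem_union, Finset.mem_union, Finset.mem_union]
        tauto)
    (le_of_eq hc1.symm) (by norm_num)
    ⟨e1, by simp⟩
  have hs2 := step_bound (F' := F ∪ {e2, p1, q1}) (X' := X ∪ {e1}) IH hu hD2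
    (by intro e he; simp only [Finset.mem_insert, Finset.mem_singleton] at he
        rw [Finset.mem_union, Finset.mem_union, Finset.mem_union]
        rcases he with rfl | rfl | rfl | rfl <;> simp)
    (by intro e he; rw [Finset.mem_union] at he
        rw [Finset.mem_union, Finset.mem_union, Finset.mem_union]
        tauto)
    (le_of_eq hc2.symm) (by norm_num)
    ⟨e2, by simp⟩
  have h4u : 4 ≤ u := by
    have := Finset.card_le_card hD1
    rw [hc1] at this
    omega
  have hsplit := Fam_split hpoint
  calc ((Fam E F X).card : ℝ)
      ≤ ((Fam E (F ∪ {e1, p2, q2}) (X ∪ {e2})).card : ℝ)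
        + ((Fam E (F ∪ {e2, p1, q1}) (X ∪ {e1})).card : ℝ) := by exact_mod_cast hsplit
    _ ≤ bb ^ (u - 4) + bb ^ (u - 4) := add_le_add hs1 hs2
    _ ≤ bb ^ u := sum_le_44 (by omega) (by omega)

end branching

end
end Stmt12

open Finset
namespace Stmt12
attribute [local instance] Classical.propDecidable
set_option linter.unusedSectionVars false
set_option linter.unusedVariables false
set_option maxHeartbeats 16000000
noncomputable section
variable {V : Type*} [Fintype V] [DecidableEq V]
variable {E F X : Finset (Sym2 V)} {u : ℕ}

/-- extract the forced edge and third edge at a `TB1` vertex with a known unforced avail edge -/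
lemma tb1_structure (hFEX : ∀ e ∈ F, e ∈ E ∧ e ∉ X) {w : V} {e : Sym2 V}
    (hw : TB1 E F X w) (he : e ∈ avail E X w) (heF : e ∉ F) :
    ∃ g h, g ∈ F ∧ w ∈ g ∧ g ∈ avail E X w ∧ g ≠ e ∧
      h ∉ F ∧ h ∈ avail E X w ∧ h ≠ e ∧ h ≠ g ∧
      avail E X w = {e, g, h} := by
  obtain ⟨g, hg⟩ := Finset.card_eq_one.1 hw.2
  have hgF : g ∈ F := (mem_eAt.1 (by rw [hg]; exact Finset.mem_singleton_self g)).1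
  have hwg : w ∈ g := (mem_eAt.1 (by rw [hg]; exact Finset.mem_singleton_self g)).2
  have hgav : g ∈ avail E X w := mem_avail.2 ⟨(hFEX g hgF).1, (hFEX g hgF).2, hwg⟩
  have hge : g ≠ e := fun h => heF (h ▸ hgF)
  obtain ⟨h, hh1, hh2, hh3⟩ := avail3_structure hw.1 he hgav (Ne.symm hge)
  simp only [Finset.mem_insert, Finset.mem_singleton, not_or] at hh1
  have hhF : h ∉ F := by
    intro hhF
    have : h ∈ eAt F w := mem_eAt.2 ⟨hhF, (mem_avail.1 hh2).2.2⟩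
    rw [hg, Finset.mem_singleton] at this
    exact hh1.2 this
  exact ⟨g, h, hgF, hwg, hgav, hge, hhF, hh2, hh1.1, hh1.2, hh3⟩

/-- branching at a `b1` vertex whose two unforced edges both lead to `b1` vertices -/
lemma branch_bb (hE : ∀ e ∈ E, ¬ e.IsDiag) (IH : IHtype E u)
    (hu : (E \ (F ∪ X)).card ≤ u)
    (hFEX : ∀ e ∈ F, e ∈ E ∧ e ∉ X)
    {v w1 w2 : V} {f e1 e2 : Sym2 V}
    (hFv : eAt F v = {f}) (hav : avail E X v = {f, e1, e2})
    (he1f : e1 ≠ f) (he2f : e2 ≠ f) (he12 : e1 ≠ e2)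
    (he1 : e1 = s(v, w1)) (he2 : e2 = s(v, w2))
    (hw1v : w1 ≠ v) (hw2v : w2 ≠ v) (hw12 : w1 ≠ w2)
    (hw1 : TB1 E F X w1) (hw2 : TB1 E F X w2) :
    ((Fam E F X).card : ℝ) ≤ bb ^ u := by
  -- basics
  have hfF : f ∈ F := (mem_eAt.1 (by rw [hFv]; exact Finset.mem_singleton_self f)).1
  have hvf : v ∈ f := (mem_eAt.1 (by rw [hFv]; exact Finset.mem_singleton_self f)).2
  have he1av : e1 ∈ avail E X v := by rw [hav]; simp
  have he2av : e2 ∈ avail E X v := by rw [hav]; simp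
  obtain ⟨he1E, he1X, hve1⟩ := mem_avail.1 he1av
  obtain ⟨he2E, he2X, hve2⟩ := mem_avail.1 he2av
  have hw1e1 : w1 ∈ e1 := by rw [he1]; simp
  have hw2e2 : w2 ∈ e2 := by rw [he2]; simp
  have he1F : e1 ∉ F := fun h => he1f (by
    have : e1 ∈ eAt F v := mem_eAt.2 ⟨h, hve1⟩
    rwa [hFv, Finset.mem_singleton] at this)
  have he2F : e2 ∉ F := fun h => he2f (by
    have : e2 ∈ eAt F v := mem_eAt.2 ⟨h, hve2⟩
    rwa [hFv, Finset.mem_singleton] at this)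
  have he1w1 : e1 ∈ avail E X w1 := mem_avail.2 ⟨he1E, he1X, hw1e1⟩
  have he2w2 : e2 ∈ avail E X w2 := mem_avail.2 ⟨he2E, he2X, hw2e2⟩
  obtain ⟨g1, h1, hg1F, hw1g1, hg1av, hg1e1, hh1F, hh1av, hh1e1, hh1g1, havw1⟩ :=
    tb1_structure hFEX hw1 he1w1 he1F
  obtain ⟨g2, h2, hg2F, hw2g2, hg2av, hg2e2, hh2F, hh2av, hh2e2, hh2g2, havw2⟩ :=
    tb1_structure hFEX hw2 he2w2 he2F
  obtain ⟨hh1E, hh1X, hw1h1⟩ := mem_avail.1 hh1av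
  obtain ⟨hh2E, hh2X, hw2h2⟩ := mem_avail.1 hh2av
  -- v ∉ h1, h2
  have hvh1 : v ∉ h1 := by
    intro hv
    rcases avail_v_cases hav hh1E hh1X hv with h | h | h
    · exact hh1F (h ▸ hfF)
    · exact hh1e1 h
    · have : w1 ∈ e2 := h ▸ hw1h1
      rw [he2, Sym2.mem_iff] at this; tauto
  have hvh2 : v ∉ h2 := by
    intro hv
    rcases avail_v_cases hav hh2E hh2X hv with h | h | h
    · exact hh2F (h ▸ hfF)
    · have : w2 ∈ e1 := h ▸ hw2h2
      rw [he1, Sym2.mem_iff] at this; tauto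
    · exact hh2e2 h
  have he1h1 : e1 ≠ h1 := ne_of_mem_not_mem hve1 hvh1
  have he2h1 : e2 ≠ h1 := ne_of_mem_not_mem hve2 hvh1
  have he1h2 : e1 ≠ h2 := ne_of_mem_not_mem hve1 hvh2
  have he2h2 : e2 ≠ h2 := ne_of_mem_not_mem hve2 hvh2
  -- cascades, for every member
  have hcascA : ∀ C, good E C → F ⊆ C → Disjoint C X → e1 ∈ C → e2 ∉ C →
      h1 ∉ C ∧ h2 ∈ C := by
    intro C hgood hFC hXC h1C h2C
    constructor
    · exact exclude_third hgood (hFC hg1F) h1C hg1e1 hw1g1 hw1e1 hw1h1 hh1g1 hh1e1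
    · have hsub : avail E X w2 ⊆ {g2, h2, e2} := by
        rw [havw2]; intro e he; simp only [Finset.mem_insert, Finset.mem_singleton] at he ⊢
        tauto
      exact (force_pair hgood hXC hsub h2C).2
  have hcascB : ∀ C, good E C → F ⊆ C → Disjoint C X → e2 ∈ C → e1 ∉ C →
      h2 ∉ C ∧ h1 ∈ C := by
    intro C hgood hFC hXC h2C h1C
    constructor
    · exact exclude_third hgood (hFC hg2F) h2C hg2e2 hw2g2 hw2e2 hw2h2 hh2g2 hh2e2
    · have hsub : avail E X w1 ⊆ {g1, h1, e1} := by
        rw [havw1]; intro e he; simp only [Finset.mem_insert, Finset.mem_singleton] at he ⊢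
        tauto
      exact (force_pair hgood hXC hsub h1C).2
  by_cases hh12 : h1 = h2
  · -- both branches dead: the family is empty
    have : Fam E F X = ∅ := by
      rw [Finset.eq_empty_iff_forall_notMem]
      intro C hC
      obtain ⟨hgood, hFC, hXC⟩ := mem_Fam.1 hC
      rcases split_pair hgood hXC (le_of_eq hav) (hFC hfF) hvf hve1 hve2
        (Ne.symm he1f) (Ne.symm he2f) he12 with ⟨h1C, h2C⟩ | ⟨h2C, h1C⟩
      · obtain ⟨hno, hyes⟩ := hcascA C hgood hFC hXC h1C h2C
        exact hno (hh12 ▸ hyes)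
      · obtain ⟨hno, hyes⟩ := hcascB C hgood hFC hXC h2C h1C
        exact hno (hh12 ▸ hyes)
    rw [this]
    simp only [Finset.card_empty, Nat.cast_zero]
    exact pow_nonneg bb_pos.le u
  · -- (4,4) branching
    have hpoint : ∀ C ∈ Fam E F X,
        C ∈ Fam E (F ∪ {e1, h2}) (X ∪ {e2, h1}) ∨
        C ∈ Fam E (F ∪ {e2, h1}) (X ∪ {e1, h2}) := by
      intro C hC
      obtain ⟨hgood, hFC, hXC⟩ := mem_Fam.1 hC
      rcases split_pair hgood hXC (le_of_eq hav) (hFC hfF) hvf hve1 hve2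
        (Ne.symm he1f) (Ne.symm he2f) he12 with ⟨h1C, h2C⟩ | ⟨h2C, h1C⟩
      · obtain ⟨hno, hyes⟩ := hcascA C hgood hFC hXC h1C h2C
        left
        refine mem_Fam.2 ⟨hgood, forced_aug hFC ?_, disjoint_aug hXC ?_⟩
        · intro e he; simp only [Finset.mem_insert, Finset.mem_singleton] at he
          rcases he with rfl | rfl <;> assumption
        · intro e he; simp only [Finset.mem_insert, Finset.mem_singleton] at he
          rcases he with rfl | rfl <;> assumption
      · obtain ⟨hno, hyes⟩ := hcascB C hgood hFC hXC h2C h1C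
        right
        refine mem_Fam.2 ⟨hgood, forced_aug hFC ?_, disjoint_aug hXC ?_⟩
        · intro e he; simp only [Finset.mem_insert, Finset.mem_singleton] at he
          rcases he with rfl | rfl <;> assumption
        · intro e he; simp only [Finset.mem_insert, Finset.mem_singleton] at he
          rcases he with rfl | rfl <;> assumption
    have hDsub : ({e1, e2, h1, h2} : Finset (Sym2 V)) ⊆ E \ (F ∪ X) := by
      intro e he
      simp only [Finset.mem_insert, Finset.mem_singleton] at he
      rw [Finset.mem_sdiff, Finset.mem_union]
      rcases he with rfl | rfl | rfl | rfl <;> exact ⟨by assumption, by tauto⟩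
    have hcD : ({e1, e2, h1, h2} : Finset (Sym2 V)).card = 4 := by
      rw [Finset.card_insert_of_notMem (by simp [he12, he1h1, he1h2]),
        Finset.card_insert_of_notMem (by simp [he2h1, he2h2]),
        Finset.card_pair hh12]
    have hs1 := step_bound (F' := F ∪ {e1, h2}) (X' := X ∪ {e2, h1}) IH hu hDsub
      (by intro e he; simp only [Finset.mem_insert, Finset.mem_singleton] at he
          rw [Finset.mem_union, Finset.mem_union, Finset.mem_union]
          rcases he with rfl | rfl | rfl | rfl <;> simp)
      (by intro e he; rw [Finset.mem_union] at he
          rw [Finset.mem_union, Finset.mem_union, Finset.mem_union]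
          tauto)
      (le_of_eq hcD.symm) (by norm_num)
      ⟨e1, by simp⟩
    have hs2 := step_bound (F' := F ∪ {e2, h1}) (X' := X ∪ {e1, h2}) IH hu hDsub
      (by intro e he; simp only [Finset.mem_insert, Finset.mem_singleton] at he
          rw [Finset.mem_union, Finset.mem_union, Finset.mem_union]
          rcases he with rfl | rfl | rfl | rfl <;> simp)
      (by intro e he; rw [Finset.mem_union] at he
          rw [Finset.mem_union, Finset.mem_union, Finset.mem_union]
          tauto)
      (le_of_eq hcD.symm) (by norm_num)
      ⟨e2, by simp⟩
    have h4u : 4 ≤ u := by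
      have := Finset.card_le_card hDsub
      rw [hcD] at this
      omega
    have hsplit := Fam_split hpoint
    calc ((Fam E F X).card : ℝ)
        ≤ ((Fam E (F ∪ {e1, h2}) (X ∪ {e2, h1})).card : ℝ)
          + ((Fam E (F ∪ {e2, h1}) (X ∪ {e1, h2})).card : ℝ) := by exact_mod_cast hsplit
      _ ≤ bb ^ (u - 4) + bb ^ (u - 4) := add_le_add hs1 hs2
      _ ≤ bb ^ u := sum_le_44 (by omega) (by omega)

/-- branching at a `b1` vertex: `e1` leads to a `b0` vertex, `e2` to a `b1` vertex -/
lemma branch_asym (hE : ∀ e ∈ E, ¬ e.IsDiag) (IH : IHtype E u)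
    (hu : (E \ (F ∪ X)).card ≤ u)
    (hFEX : ∀ e ∈ F, e ∈ E ∧ e ∉ X)
    (hclass : ∀ w, TA E F X w ∨ TB0 E F X w ∨ TB1 E F X w)
    {v w1 w2 : V} {f e1 e2 : Sym2 V}
    (hFv : eAt F v = {f}) (hav : avail E X v = {f, e1, e2})
    (he1f : e1 ≠ f) (he2f : e2 ≠ f) (he12 : e1 ≠ e2)
    (he1 : e1 = s(v, w1)) (he2 : e2 = s(v, w2))
    (hw1v : w1 ≠ v) (hw2v : w2 ≠ v) (hw12 : w1 ≠ w2)
    (hw1 : TB0 E F X w1) (hw2 : TB1 E F X w2) :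
    ((Fam E F X).card : ℝ) ≤ bb ^ u := by
  -- basics
  have hfF : f ∈ F := (mem_eAt.1 (by rw [hFv]; exact Finset.mem_singleton_self f)).1
  have hvf : v ∈ f := (mem_eAt.1 (by rw [hFv]; exact Finset.mem_singleton_self f)).2
  have he1av : e1 ∈ avail E X v := by rw [hav]; simp
  have he2av : e2 ∈ avail E X v := by rw [hav]; simp
  obtain ⟨he1E, he1X, hve1⟩ := mem_avail.1 he1av
  obtain ⟨he2E, he2X, hve2⟩ := mem_avail.1 he2av
  have hw1e1 : w1 ∈ e1 := by rw [he1]; simp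
  have hw2e2 : w2 ∈ e2 := by rw [he2]; simp
  have he1F : e1 ∉ F := fun h => he1f (by
    have : e1 ∈ eAt F v := mem_eAt.2 ⟨h, hve1⟩
    rwa [hFv, Finset.mem_singleton] at this)
  have he2F : e2 ∉ F := fun h => he2f (by
    have : e2 ∈ eAt F v := mem_eAt.2 ⟨h, hve2⟩
    rwa [hFv, Finset.mem_singleton] at this)
  have he1w1 : e1 ∈ avail E X w1 := mem_avail.2 ⟨he1E, he1X, hw1e1⟩
  have he2w2 : e2 ∈ avail E X w2 := mem_avail.2 ⟨he2E, he2X, hw2e2⟩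
  -- structure at w1 (b0)
  obtain ⟨p1, q1, hp1q1, hp1e1, hq1e1, hp1av, hq1av, havw1⟩ := avail3_structure1 hw1.1 he1w1
  obtain ⟨hp1E, hp1X, hw1p1⟩ := mem_avail.1 hp1av
  obtain ⟨hq1E, hq1X, hw1q1⟩ := mem_avail.1 hq1av
  have hnotF1 : ∀ e, w1 ∈ e → e ∉ F := by
    intro e hw he
    have hmem : e ∈ eAt F w1 := mem_eAt.2 ⟨he, hw⟩
    rw [hw1.2] at hmem
    exact Finset.notMem_empty e hmem
  have hp1F : p1 ∉ F := hnotF1 p1 hw1p1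
  have hq1F : q1 ∉ F := hnotF1 q1 hw1q1
  -- structure at w2 (b1)
  obtain ⟨g2, h2, hg2F, hw2g2, hg2av, hg2e2, hh2F, hh2av, hh2e2, hh2g2, havw2⟩ :=
    tb1_structure hFEX hw2 he2w2 he2F
  obtain ⟨hh2E, hh2X, hw2h2⟩ := mem_avail.1 hh2av
  -- v not in p1, q1, h2
  have hvnot1 : ∀ e, e ∈ E → e ∉ X → e ≠ e1 → e ∉ F → w1 ∈ e → v ∉ e := by
    intro e heE heX hne heF hwe hv
    rcases avail_v_cases hav heE heX hv with h | h | h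
    · exact heF (h ▸ hfF)
    · exact hne h
    · have hmm : w1 ∈ e2 := h ▸ hwe
      rw [he2, Sym2.mem_iff] at hmm
      tauto
  have hvp1 : v ∉ p1 := hvnot1 p1 hp1E hp1X hp1e1 hp1F hw1p1
  have hvq1 : v ∉ q1 := hvnot1 q1 hq1E hq1X hq1e1 hq1F hw1q1
  have hvh2 : v ∉ h2 := by
    intro hv
    rcases avail_v_cases hav hh2E hh2X hv with h | h | h
    · exact hh2F (h ▸ hfF)
    · have hmm : w2 ∈ e1 := h ▸ hw2h2
      rw [he1, Sym2.mem_iff] at hmm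
      tauto
    · exact hh2e2 h
  have he1p1 : e1 ≠ p1 := ne_of_mem_not_mem hve1 hvp1
  have he1q1 : e1 ≠ q1 := ne_of_mem_not_mem hve1 hvq1
  have he2p1 : e2 ≠ p1 := ne_of_mem_not_mem hve2 hvp1
  have he2q1 : e2 ≠ q1 := ne_of_mem_not_mem hve2 hvq1
  have he1h2 : e1 ≠ h2 := ne_of_mem_not_mem hve1 hvh2
  have he2h2 : e2 ≠ h2 := ne_of_mem_not_mem hve2 hvh2
  -- cascades shared by all subcases
  have hsubw2 : avail E X w2 ⊆ {g2, h2, e2} := by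
    rw [havw2]; intro e he; simp only [Finset.mem_insert, Finset.mem_singleton] at he ⊢
    tauto
  have hsubw1 : avail E X w1 ⊆ {p1, q1, e1} := by
    rw [havw1]; intro e he; simp only [Finset.mem_insert, Finset.mem_singleton] at he ⊢
    tauto
  have hcascA : ∀ C, good E C → F ⊆ C → Disjoint C X → e2 ∉ C → h2 ∈ C :=
    fun C hgood hFC hXC h2C => (force_pair hgood hXC hsubw2 h2C).2
  have hcascB1 : ∀ C, good E C → F ⊆ C → Disjoint C X → e1 ∉ C → p1 ∈ C ∧ q1 ∈ C :=
    fun C hgood hFC hXC h1C => force_pair hgood hXC hsubw1 h1C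
  have hcascB2 : ∀ C, good E C → F ⊆ C → Disjoint C X → e2 ∈ C → h2 ∉ C :=
    fun C hgood hFC hXC h2C =>
      exclude_third hgood (hFC hg2F) h2C hg2e2 hw2g2 hw2e2 hw2h2 hh2g2 hh2e2
  -- the endpoint z of h2
  obtain ⟨z, hzw2, hh2eq⟩ := other_endpoint hE hh2E hw2h2
  have hzh2 : z ∈ h2 := by rw [hh2eq]; simp
  have hzv : z ≠ v := fun h => hvh2 (h ▸ hzh2)
  by_cases hw1h2 : w1 ∈ h2
  · -- h2 joins w1 and w2 : the second branch is dead, cheap single reduction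
    have hh2pq : h2 = p1 ∨ h2 = q1 := by
      have : h2 ∈ avail E X w1 := mem_avail.2 ⟨hh2E, hh2X, hw1h2⟩
      rw [havw1] at this
      simp only [Finset.mem_insert, Finset.mem_singleton] at this
      rcases this with h | h | h
      · exact absurd h (Ne.symm he1h2)
      · exact Or.inl h
      · exact Or.inr h
    have hforce : ∀ C ∈ Fam E F X, C ∈ Fam E (F ∪ {e1}) (X ∪ {e2}) := by
      intro C hC
      obtain ⟨hgood, hFC, hXC⟩ := mem_Fam.1 hC
      rcases split_pair hgood hXC (le_of_eq hav) (hFC hfF) hvf hve1 hve2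
        (Ne.symm he1f) (Ne.symm he2f) he12 with ⟨h1C, h2C⟩ | ⟨h2C, h1C⟩
      · refine mem_Fam.2 ⟨hgood, forced_aug hFC ?_, disjoint_aug hXC ?_⟩
        · intro e he; rw [Finset.mem_singleton] at he; subst he; exact h1C
        · intro e he; rw [Finset.mem_singleton] at he; subst he; exact h2C
      · exfalso
        have hh2no : h2 ∉ C := hcascB2 C hgood hFC hXC h2C
        rcases hh2pq with h | h
        · have hsub : avail E X w1 ⊆ {q1, h2, e1} := by
            rw [havw1, ← h]
            intro e he; simp only [Finset.mem_insert, Finset.mem_singleton] at he ⊢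
            tauto
          exact hh2no (force_pair hgood hXC hsub h1C).2
        · have hsub : avail E X w1 ⊆ {p1, h2, e1} := by
            rw [havw1, ← h]
            intro e he; simp only [Finset.mem_insert, Finset.mem_singleton] at he ⊢
            tauto
          exact hh2no (force_pair hgood hXC hsub h1C).2
    have hDsub : ({e1, e2} : Finset (Sym2 V)) ⊆ E \ (F ∪ X) := by
      intro e he
      simp only [Finset.mem_insert, Finset.mem_singleton] at he
      rw [Finset.mem_sdiff, Finset.mem_union]
      rcases he with rfl | rfl <;> exact ⟨by assumption, by tauto⟩
    have hs1 := step_bound (F' := F ∪ {e1}) (X' := X ∪ {e2}) IH hu hDsub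
      (by intro e he; simp only [Finset.mem_insert, Finset.mem_singleton] at he
          rw [Finset.mem_union, Finset.mem_union, Finset.mem_union]
          rcases he with rfl | rfl <;> simp)
      (by intro e he; rw [Finset.mem_union] at he
          rw [Finset.mem_union, Finset.mem_union, Finset.mem_union]
          tauto)
      (le_of_eq (Finset.card_pair he12).symm) (by norm_num)
      ⟨e1, by simp⟩
    calc ((Fam E F X).card : ℝ)
        ≤ ((Fam E (F ∪ {e1}) (X ∪ {e2})).card : ℝ) := by
          exact_mod_cast Fam_mono hforce
      _ ≤ bb ^ (u - 2) := hs1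
      _ ≤ bb ^ u := bb_mono (by omega)
  · -- w1 ∉ h2
    have hzw1 : z ≠ w1 := fun h => hw1h2 (h ▸ hzh2)
    have hp1h2 : p1 ≠ h2 := ne_of_mem_not_mem hw1p1 hw1h2
    have hq1h2 : q1 ≠ h2 := ne_of_mem_not_mem hw1q1 hw1h2
    have hh2zav : h2 ∈ avail E X z := mem_avail.2 ⟨hh2E, hh2X, hzh2⟩
    have hvnotz : ∀ e', e' ∈ E → e' ∉ X → e' ∉ F → z ∈ e' → v ∉ e' := by
      intro e' heE heX heF hze hv
      rcases avail_v_cases hav heE heX hv with h | h | h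
      · exact heF (h ▸ hfF)
      · have hmm : z ∈ e1 := h ▸ hze
        rw [he1, Sym2.mem_iff] at hmm
        tauto
      · have hmm : z ∈ e2 := h ▸ hze
        rw [he2, Sym2.mem_iff] at hmm
        tauto
    have hz01 : TB0 E F X z ∨ TB1 E F X z := by
      rcases hclass z with hz | hz | hz
      · exact absurd (hz.2 hh2zav) hh2F
      · exact Or.inl hz
      · exact Or.inr hz
    rcases hz01 with hz0 | hz1
    · -- z is b0 : the (3,6) case
      obtain ⟨r1, r2, hr12, hr1h2, hr2h2, hr1av, hr2av, havz⟩ := avail3_structure1 hz0.1 hh2zav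
      obtain ⟨hr1E, hr1X, hzr1⟩ := mem_avail.1 hr1av
      obtain ⟨hr2E, hr2X, hzr2⟩ := mem_avail.1 hr2av
      have hnotFz : ∀ e, z ∈ e → e ∉ F := by
        intro e hw he
        have hmem : e ∈ eAt F z := mem_eAt.2 ⟨he, hw⟩
        rw [hz0.2] at hmem
        exact Finset.notMem_empty e hmem
      have hr1F : r1 ∉ F := hnotFz r1 hzr1
      have hr2F : r2 ∉ F := hnotFz r2 hzr2
      obtain ⟨r, hror, hrp1, hrq1⟩ : ∃ r, (r = r1 ∨ r = r2) ∧ r ≠ p1 ∧ r ≠ q1 := by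
        by_cases hr1p : r1 = p1 ∨ r1 = q1
        · have hw1r1 : w1 ∈ r1 := by
            rcases hr1p with h | h
            · exact h ▸ hw1p1
            · exact h ▸ hw1q1
          have hr1eq : r1 = s(z, w1) := eq_mk_of_mem hzr1 hw1r1 (Ne.symm hzw1).symm
          refine ⟨r2, Or.inr rfl, ?_, ?_⟩
          · intro h
            have hw1r2 : w1 ∈ r2 := h ▸ hw1p1
            exact hr12 (hr1eq.trans (eq_mk_of_mem hzr2 hw1r2 (Ne.symm hzw1).symm).symm)
          · intro h
            have hw1r2 : w1 ∈ r2 := h ▸ hw1q1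
            exact hr12 (hr1eq.trans (eq_mk_of_mem hzr2 hw1r2 (Ne.symm hzw1).symm).symm)
        · push_neg at hr1p
          exact ⟨r1, Or.inl rfl, hr1p.1, hr1p.2⟩
      have hrE : r ∈ E := by rcases hror with rfl | rfl <;> assumption
      have hrX : r ∉ X := by rcases hror with rfl | rfl <;> assumption
      have hzr : z ∈ r := by rcases hror with rfl | rfl <;> assumption
      have hrF : r ∉ F := by rcases hror with rfl | rfl <;> assumption
      have hrh2 : r ≠ h2 := by rcases hror with rfl | rfl <;> assumption
      have hvr : v ∉ r := hvnotz r hrE hrX hrF hzr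
      have he1r : e1 ≠ r := ne_of_mem_not_mem hve1 hvr
      have he2r : e2 ≠ r := ne_of_mem_not_mem hve2 hvr
      have hpoint : ∀ C ∈ Fam E F X,
          C ∈ Fam E (F ∪ {e1, h2}) (X ∪ {e2}) ∨
          C ∈ Fam E (F ∪ {e2, p1, q1, r}) (X ∪ {e1, h2}) := by
        intro C hC
        obtain ⟨hgood, hFC, hXC⟩ := mem_Fam.1 hC
        rcases split_pair hgood hXC (le_of_eq hav) (hFC hfF) hvf hve1 hve2
          (Ne.symm he1f) (Ne.symm he2f) he12 with ⟨h1C, h2C⟩ | ⟨h2C, h1C⟩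
        · left
          have hh2C := hcascA C hgood hFC hXC h2C
          refine mem_Fam.2 ⟨hgood, forced_aug hFC ?_, disjoint_aug hXC ?_⟩
          · intro e he; simp only [Finset.mem_insert, Finset.mem_singleton] at he
            rcases he with rfl | rfl <;> assumption
          · intro e he; rw [Finset.mem_singleton] at he; subst he; exact h2C
        · right
          obtain ⟨hp1C, hq1C⟩ := hcascB1 C hgood hFC hXC h1C
          have hh2no := hcascB2 C hgood hFC hXC h2C
          have hrC : r ∈ C := by
            have hsubz : avail E X z ⊆ {r1, r2, h2} := by
              rw [havz]; intro e he
              simp only [Finset.mem_insert, Finset.mem_singleton] at he ⊢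
              tauto
            obtain ⟨hr1C, hr2C⟩ := force_pair hgood hXC hsubz hh2no
            rcases hror with rfl | rfl <;> assumption
          refine mem_Fam.2 ⟨hgood, forced_aug hFC ?_, disjoint_aug hXC ?_⟩
          · intro e he; simp only [Finset.mem_insert, Finset.mem_singleton] at he
            rcases he with rfl | rfl | rfl | rfl <;> assumption
          · intro e he; simp only [Finset.mem_insert, Finset.mem_singleton] at he
            rcases he with rfl | rfl <;> assumption
      have hD1 : ({e1, e2, h2} : Finset (Sym2 V)) ⊆ E \ (F ∪ X) := by
        intro e he
        simp only [Finset.mem_insert, Finset.mem_singleton] at he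
        rw [Finset.mem_sdiff, Finset.mem_union]
        rcases he with rfl | rfl | rfl <;> exact ⟨by assumption, by tauto⟩
      have hD2 : ({e1, e2, p1, q1, h2, r} : Finset (Sym2 V)) ⊆ E \ (F ∪ X) := by
        intro e he
        simp only [Finset.mem_insert, Finset.mem_singleton] at he
        rw [Finset.mem_sdiff, Finset.mem_union]
        rcases he with rfl | rfl | rfl | rfl | rfl | rfl <;> exact ⟨by assumption, by tauto⟩
      have hc1 : ({e1, e2, h2} : Finset (Sym2 V)).card = 3 := by
        rw [Finset.card_insert_of_notMem (by simp [he12, he1h2]),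
          Finset.card_pair he2h2]
      have hc2 : ({e1, e2, p1, q1, h2, r} : Finset (Sym2 V)).card = 6 := by
        rw [Finset.card_insert_of_notMem (by simp [he12, he1p1, he1q1, he1h2, he1r]),
          Finset.card_insert_of_notMem (by simp [he2p1, he2q1, he2h2, he2r]),
          Finset.card_insert_of_notMem (by simp [hp1q1, hp1h2, Ne.symm hrp1]),
          Finset.card_insert_of_notMem (by simp [hq1h2, Ne.symm hrq1]),
          Finset.card_insert_of_notMem (by simp [Ne.symm hrh2]),
          Finset.card_singleton]
      have hs1 := step_bound (F' := F ∪ {e1, h2}) (X' := X ∪ {e2}) IH hu hD1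
        (by intro e he; simp only [Finset.mem_insert, Finset.mem_singleton] at he
            rw [Finset.mem_union, Finset.mem_union, Finset.mem_union]
            rcases he with rfl | rfl | rfl <;> simp)
        (by intro e he; rw [Finset.mem_union] at he
            rw [Finset.mem_union, Finset.mem_union, Finset.mem_union]
            tauto)
        (le_of_eq hc1.symm) (by norm_num)
        ⟨e1, by simp⟩
      have hs2 := step_bound (F' := F ∪ {e2, p1, q1, r}) (X' := X ∪ {e1, h2}) IH hu hD2
        (by intro e he; simp only [Finset.mem_insert, Finset.mem_singleton] at he
            rw [Finset.mem_union, Finset.mem_union, Finset.mem_union]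
            rcases he with rfl | rfl | rfl | rfl | rfl | rfl <;> simp)
        (by intro e he; rw [Finset.mem_union] at he
            rw [Finset.mem_union, Finset.mem_union, Finset.mem_union]
            tauto)
        (le_of_eq hc2.symm) (by norm_num)
        ⟨e2, by simp⟩
      have h6u : 6 ≤ u := by
        have := Finset.card_le_card hD2
        rw [hc2] at this
        omega
      have hsplit := Fam_split hpoint
      calc ((Fam E F X).card : ℝ)
          ≤ ((Fam E (F ∪ {e1, h2}) (X ∪ {e2})).card : ℝ)
            + ((Fam E (F ∪ {e2, p1, q1, r}) (X ∪ {e1, h2})).card : ℝ) := by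
            exact_mod_cast hsplit
        _ ≤ bb ^ (u - 3) + bb ^ (u - 6) := add_le_add hs1 hs2
        _ ≤ bb ^ u := sum_le_36 (by omega) (by omega)
    · -- z is b1
      obtain ⟨g3, h3, hg3F, hzg3, hg3av, hg3h2, hh3F, hh3av, hh3h2, hh3g3, havz⟩ :=
        tb1_structure hFEX hz1 hh2zav hh2F
      obtain ⟨hh3E, hh3X, hzh3⟩ := mem_avail.1 hh3av
      have hvh3 : v ∉ h3 := hvnotz h3 hh3E hh3X hh3F hzh3
      have he1h3 : e1 ≠ h3 := ne_of_mem_not_mem hve1 hvh3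
      have he2h3 : e2 ≠ h3 := ne_of_mem_not_mem hve2 hvh3
      have hcascAz : ∀ C, good E C → F ⊆ C → Disjoint C X → h2 ∈ C → h3 ∉ C :=
        fun C hgood hFC hXC hh2C =>
          exclude_third hgood (hFC hg3F) hh2C hg3h2 hzg3 hzh2 hzh3 hh3g3 hh3h2
      have hcascBz : ∀ C, good E C → F ⊆ C → Disjoint C X → h2 ∉ C → h3 ∈ C := by
        intro C hgood hFC hXC hh2no
        have hsubz : avail E X z ⊆ {g3, h3, h2} := by
          rw [havz]; intro e he
          simp only [Finset.mem_insert, Finset.mem_singleton] at he ⊢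
          tauto
        exact (force_pair hgood hXC hsubz hh2no).2
      by_cases hh3w1 : w1 ∈ h3
      · -- h3 ∈ {p1, q1} : the (5,5) case
        have hh3pq : h3 = p1 ∨ h3 = q1 := by
          have : h3 ∈ avail E X w1 := mem_avail.2 ⟨hh3E, hh3X, hh3w1⟩
          rw [havw1] at this
          simp only [Finset.mem_insert, Finset.mem_singleton] at this
          rcases this with h | h | h
          · exact absurd h (Ne.symm he1h3)
          · exact Or.inl h
          · exact Or.inr h
        -- uniform treatment: a is the one equal to h3, b the other
        have main : ∀ a b : Sym2 V, h3 = a → a ≠ b →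
            avail E X w1 = {e1, a, b} →
            w1 ∈ a → w1 ∈ b → v ∉ a → v ∉ b → a ∉ F → b ∉ F →
            a ∈ E → a ∉ X → b ∈ E → b ∉ X →
            ((Fam E F X).card : ℝ) ≤ bb ^ u := by
          intro a b hh3a hab havw1' hw1a hw1b hva hvb haF hbF haE haX hbE hbX
          have he1a : e1 ≠ a := ne_of_mem_not_mem hve1 hva
          have he1b : e1 ≠ b := ne_of_mem_not_mem hve1 hvb
          have he2a : e2 ≠ a := ne_of_mem_not_mem hve2 hva
          have he2b : e2 ≠ b := ne_of_mem_not_mem hve2 hvb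
          have hah2 : a ≠ h2 := ne_of_mem_not_mem hw1a hw1h2
          have hbh2 : b ≠ h2 := ne_of_mem_not_mem hw1b hw1h2
          have hpoint : ∀ C ∈ Fam E F X,
              C ∈ Fam E (F ∪ {e1, h2, b}) (X ∪ {e2, a}) ∨
              C ∈ Fam E (F ∪ {e2, a, b}) (X ∪ {e1, h2}) := by
            intro C hC
            obtain ⟨hgood, hFC, hXC⟩ := mem_Fam.1 hC
            rcases split_pair hgood hXC (le_of_eq hav) (hFC hfF) hvf hve1 hve2
              (Ne.symm he1f) (Ne.symm he2f) he12 with ⟨h1C, h2C⟩ | ⟨h2C, h1C⟩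
            · left
              have hh2C := hcascA C hgood hFC hXC h2C
              have hano : a ∉ C := hh3a ▸ hcascAz C hgood hFC hXC hh2C
              have hbC : b ∈ C := by
                have hsub : avail E X w1 ⊆ {b, e1, a} := by
                  rw [havw1']; intro e he
                  simp only [Finset.mem_insert, Finset.mem_singleton] at he ⊢
                  tauto
                exact (force_pair hgood hXC hsub hano).1
              refine mem_Fam.2 ⟨hgood, forced_aug hFC ?_, disjoint_aug hXC ?_⟩
              · intro e he; simp only [Finset.mem_insert, Finset.mem_singleton] at he
                rcases he with rfl | rfl | rfl <;> assumption
              · intro e he; simp only [Finset.mem_insert, Finset.mem_singleton] at he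
                rcases he with rfl | rfl <;> assumption
            · right
              have hsub : avail E X w1 ⊆ {a, b, e1} := by
                rw [havw1']; intro e he
                simp only [Finset.mem_insert, Finset.mem_singleton] at he ⊢
                tauto
              obtain ⟨haC, hbC⟩ := force_pair hgood hXC hsub h1C
              have hh2no := hcascB2 C hgood hFC hXC h2C
              refine mem_Fam.2 ⟨hgood, forced_aug hFC ?_, disjoint_aug hXC ?_⟩
              · intro e he; simp only [Finset.mem_insert, Finset.mem_singleton] at he
                rcases he with rfl | rfl | rfl <;> assumption
              · intro e he; simp only [Finset.mem_insert, Finset.mem_singleton] at he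
                rcases he with rfl | rfl <;> assumption
          have hD : ({e1, e2, h2, a, b} : Finset (Sym2 V)) ⊆ E \ (F ∪ X) := by
            intro e he
            simp only [Finset.mem_insert, Finset.mem_singleton] at he
            rw [Finset.mem_sdiff, Finset.mem_union]
            rcases he with rfl | rfl | rfl | rfl | rfl <;> exact ⟨by assumption, by tauto⟩
          have hcD : ({e1, e2, h2, a, b} : Finset (Sym2 V)).card = 5 := by
            rw [Finset.card_insert_of_notMem (by simp [he12, he1h2, he1a, he1b]),
              Finset.card_insert_of_notMem (by simp [he2h2, he2a, he2b]),
              Finset.card_insert_of_notMem (by simp [Ne.symm hah2, Ne.symm hbh2]),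
              Finset.card_pair hab]
          have hs1 := step_bound (F' := F ∪ {e1, h2, b}) (X' := X ∪ {e2, a}) IH hu hD
            (by intro e he; simp only [Finset.mem_insert, Finset.mem_singleton] at he
                rw [Finset.mem_union, Finset.mem_union, Finset.mem_union]
                rcases he with rfl | rfl | rfl | rfl | rfl <;> simp)
            (by intro e he; rw [Finset.mem_union] at he
                rw [Finset.mem_union, Finset.mem_union, Finset.mem_union]
                tauto)
            (le_of_eq hcD.symm) (by norm_num)
            ⟨e1, by simp⟩
          have hs2 := step_bound (F' := F ∪ {e2, a, b}) (X' := X ∪ {e1, h2}) IH hu hD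
            (by intro e he; simp only [Finset.mem_insert, Finset.mem_singleton] at he
                rw [Finset.mem_union, Finset.mem_union, Finset.mem_union]
                rcases he with rfl | rfl | rfl | rfl | rfl <;> simp)
            (by intro e he; rw [Finset.mem_union] at he
                rw [Finset.mem_union, Finset.mem_union, Finset.mem_union]
                tauto)
            (le_of_eq hcD.symm) (by norm_num)
            ⟨e2, by simp⟩
          have h5u : 5 ≤ u := by
            have := Finset.card_le_card hD
            rw [hcD] at this
            omega
          have hsplit := Fam_split hpoint
          calc ((Fam E F X).card : ℝ)
              ≤ ((Fam E (F ∪ {e1, h2, b}) (X ∪ {e2, a})).card : ℝ)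
                + ((Fam E (F ∪ {e2, a, b}) (X ∪ {e1, h2})).card : ℝ) := by
                exact_mod_cast hsplit
            _ ≤ bb ^ (u - 5) + bb ^ (u - 5) := add_le_add hs1 hs2
            _ ≤ bb ^ u := sum_le_55 (by omega) (by omega)
        rcases hh3pq with h | h
        · exact main p1 q1 h hp1q1 havw1 hw1p1 hw1q1 hvp1 hvq1 hp1F hq1F
            hp1E hp1X hq1E hq1X
        · refine main q1 p1 h (Ne.symm hp1q1) ?_ hw1q1 hw1p1 hvq1 hvp1 hq1F hp1F
            hq1E hq1X hp1E hp1X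
          rw [havw1, Finset.pair_comm p1 q1]
      · -- w1 ∉ h3 : the (4,6) case
        have hp1h3 : p1 ≠ h3 := ne_of_mem_not_mem hw1p1 hh3w1
        have hq1h3 : q1 ≠ h3 := ne_of_mem_not_mem hw1q1 hh3w1
        have hpoint : ∀ C ∈ Fam E F X,
            C ∈ Fam E (F ∪ {e1, h2}) (X ∪ {e2, h3}) ∨
            C ∈ Fam E (F ∪ {e2, p1, q1, h3}) (X ∪ {e1, h2}) := by
          intro C hC
          obtain ⟨hgood, hFC, hXC⟩ := mem_Fam.1 hC
          rcases split_pair hgood hXC (le_of_eq hav) (hFC hfF) hvf hve1 hve2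
            (Ne.symm he1f) (Ne.symm he2f) he12 with ⟨h1C, h2C⟩ | ⟨h2C, h1C⟩
          · left
            have hh2C := hcascA C hgood hFC hXC h2C
            have hh3no := hcascAz C hgood hFC hXC hh2C
            refine mem_Fam.2 ⟨hgood, forced_aug hFC ?_, disjoint_aug hXC ?_⟩
            · intro e he; simp only [Finset.mem_insert, Finset.mem_singleton] at he
              rcases he with rfl | rfl <;> assumption
            · intro e he; simp only [Finset.mem_insert, Finset.mem_singleton] at he
              rcases he with rfl | rfl <;> assumption
          · right
            obtain ⟨hp1C, hq1C⟩ := hcascB1 C hgood hFC hXC h1C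
            have hh2no := hcascB2 C hgood hFC hXC h2C
            have hh3C := hcascBz C hgood hFC hXC hh2no
            refine mem_Fam.2 ⟨hgood, forced_aug hFC ?_, disjoint_aug hXC ?_⟩
            · intro e he; simp only [Finset.mem_insert, Finset.mem_singleton] at he
              rcases he with rfl | rfl | rfl | rfl <;> assumption
            · intro e he; simp only [Finset.mem_insert, Finset.mem_singleton] at he
              rcases he with rfl | rfl <;> assumption
        have hD1 : ({e1, e2, h2, h3} : Finset (Sym2 V)) ⊆ E \ (F ∪ X) := by
          intro e he
          simp only [Finset.mem_insert, Finset.mem_singleton] at he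
          rw [Finset.mem_sdiff, Finset.mem_union]
          rcases he with rfl | rfl | rfl | rfl <;> exact ⟨by assumption, by tauto⟩
        have hD2 : ({e1, e2, p1, q1, h2, h3} : Finset (Sym2 V)) ⊆ E \ (F ∪ X) := by
          intro e he
          simp only [Finset.mem_insert, Finset.mem_singleton] at he
          rw [Finset.mem_sdiff, Finset.mem_union]
          rcases he with rfl | rfl | rfl | rfl | rfl | rfl <;> exact ⟨by assumption, by tauto⟩
        have hc1 : ({e1, e2, h2, h3} : Finset (Sym2 V)).card = 4 := by
          rw [Finset.card_insert_of_notMem (by simp [he12, he1h2, he1h3]),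
            Finset.card_insert_of_notMem (by simp [he2h2, he2h3]),
            Finset.card_pair (Ne.symm hh3h2)]
        have hc2 : ({e1, e2, p1, q1, h2, h3} : Finset (Sym2 V)).card = 6 := by
          rw [Finset.card_insert_of_notMem (by simp [he12, he1p1, he1q1, he1h2, he1h3]),
            Finset.card_insert_of_notMem (by simp [he2p1, he2q1, he2h2, he2h3]),
            Finset.card_insert_of_notMem (by simp [hp1q1, hp1h2, hp1h3]),
            Finset.card_insert_of_notMem (by simp [hq1h2, hq1h3]),
            Finset.card_insert_of_notMem (by simp [Ne.symm hh3h2]),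
            Finset.card_singleton]
        have hs1 := step_bound (F' := F ∪ {e1, h2}) (X' := X ∪ {e2, h3}) IH hu hD1
          (by intro e he; simp only [Finset.mem_insert, Finset.mem_singleton] at he
              rw [Finset.mem_union, Finset.mem_union, Finset.mem_union]
              rcases he with rfl | rfl | rfl | rfl <;> simp)
          (by intro e he; rw [Finset.mem_union] at he
              rw [Finset.mem_union, Finset.mem_union, Finset.mem_union]
              tauto)
          (le_of_eq hc1.symm) (by norm_num)
          ⟨e1, by simp⟩
        have hs2 := step_bound (F' := F ∪ {e2, p1, q1, h3}) (X' := X ∪ {e1, h2}) IH hu hD2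
          (by intro e he; simp only [Finset.mem_insert, Finset.mem_singleton] at he
              rw [Finset.mem_union, Finset.mem_union, Finset.mem_union]
              rcases he with rfl | rfl | rfl | rfl | rfl | rfl <;> simp)
          (by intro e he; rw [Finset.mem_union] at he
              rw [Finset.mem_union, Finset.mem_union, Finset.mem_union]
              tauto)
          (le_of_eq hc2.symm) (by norm_num)
          ⟨e2, by simp⟩
        have h6u : 6 ≤ u := by
          have := Finset.card_le_card hD2
          rw [hc2] at this
          omega
        have hsplit := Fam_split hpoint
        calc ((Fam E F X).card : ℝ)
            ≤ ((Fam E (F ∪ {e1, h2}) (X ∪ {e2, h3})).card : ℝ)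
              + ((Fam E (F ∪ {e2, p1, q1, h3}) (X ∪ {e1, h2})).card : ℝ) := by
              exact_mod_cast hsplit
          _ ≤ bb ^ (u - 4) + bb ^ (u - 6) := add_le_add hs1 hs2
          _ ≤ bb ^ u := sum_le_46 (by omega) (by omega)

end
end Stmt12

open Finset
namespace Stmt12
attribute [local instance] Classical.propDecidable
set_option linter.unusedSectionVars false
set_option linter.unusedVariables false
set_option maxHeartbeats 1600000
noncomputable section
variable {V : Type*} [Fintype V] [DecidableEq V] {G : SimpleGraph V}

open SimpleGraph

lemma walk_countP {x y : V} (r : G.Walk x y) (z : V) : ¬ r.Nil → r.support.Nodup →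
    r.edges.countP (fun e => decide (z ∈ e)) =
      if z = x ∨ z = y then 1 else if z ∈ r.support then 2 else 0 := by
  induction r with
  | nil => intro hnil _; exact absurd Walk.nil_nil hnil
  | @cons a b c hadj r' IH =>
    intro _ hnd
    have hnd' : r'.support.Nodup := by
      rw [Walk.support_cons] at hnd; exact hnd.of_cons
    have hans : a ∉ r'.support := by
      rw [Walk.support_cons] at hnd
      exact (List.nodup_cons.1 hnd).1
    have hab : a ≠ b := hadj.ne
    have hac : a ≠ c := fun h => hans (h ▸ r'.end_mem_support)
    by_cases hr' : r'.Nil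
    · have hbc : b = c := hr'.eq
      have hedges : r'.edges = [] := by
        rw [Walk.nil_iff_length_eq] at hr'
        exact List.length_eq_zero_iff.1 (by rw [Walk.length_edges, hr'])
      have hsupp : r'.support = [b] := Walk.nil_iff_support_eq.1 hr'
      subst hbc
      rw [Walk.edges_cons, hedges, Walk.support_cons, hsupp]
      simp only [List.countP_cons, List.countP_nil, Sym2.mem_iff]
      by_cases hza : z = a
      · subst hza
        simp [hab, hac]
      · by_cases hzb : z = b
        · subst hzb
          simp [hza, Ne.symm hab]
        · simp [hza, hzb]
    · have hIH := IH hr' hnd'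
      have hbc : b ≠ c := by
        intro h
        subst h
        cases r' with
        | nil => exact hr' Walk.nil_nil
        | cons h'' r'' =>
          rw [Walk.support_cons] at hnd'
          exact (List.nodup_cons.1 hnd').1 r''.end_mem_support
      rw [Walk.edges_cons, List.countP_cons, hIH, Walk.support_cons]
      simp only [Sym2.mem_iff]
      by_cases hza : z = a
      · subst hza
        have hzs : z ∉ r'.support := hans
        simp [hab, hac, hans]
      · by_cases hzb : z = b
        · subst hzb
          simp [hza, hbc, Ne.symm hza, r'.start_mem_support]
        · by_cases hzc : z = c
          · subst hzc
            simp [hza, hzb, Ne.symm hza]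
          · by_cases hzs : z ∈ r'.support
            · simp [hza, hzb, hzc, hzs]
            · simp [hza, hzb, hzc, hzs]

lemma cycle_countP {z : V} (q : G.Walk z z) (hqc : q.IsCycle) :
    q.edges.countP (fun e => decide (z ∈ e)) = 2 := by
  cases q with
  | nil => exact absurd hqc (by simp [Walk.isCycle_def])
  | @cons _ b _ hadj r' =>
    have hnd' : r'.support.Nodup := by
      rw [Walk.isCycle_def] at hqc
      have := hqc.2.2
      rwa [Walk.support_cons] at this
    have hr'nil : ¬ r'.Nil := by
      have h3 := hqc.three_le_length
      rw [Walk.length_cons] at h3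
      rw [Walk.not_nil_iff_lt_length]
      omega
    rw [Walk.edges_cons, List.countP_cons, walk_countP r' z hr'nil hnd']
    simp [Sym2.mem_iff]

/-- every vertex lies on exactly 2 edges of a Hamiltonian cycle -/
lemma cycle_two_edges {v : V} {p : G.Walk v v} (hp : p.IsHamiltonianCycle) (z : V) :
    (eAt p.edges.toFinset z).card = 2 := by
  have hz : z ∈ p.support := hp.mem_support z
  have hqc : (p.rotate z hz).IsCycle := hp.isCycle.rotate hz
  have hperm : (p.rotate z hz).edges.Perm p.edges := (p.rotate_edges z hz).perm
  have hnodupP : p.edges.Nodup := hp.isCycle.edges_nodup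
  have h1 : (eAt p.edges.toFinset z).card = p.edges.countP (fun e => decide (z ∈ e)) := by
    have hset : eAt p.edges.toFinset z = (p.edges.filter (fun e => decide (z ∈ e))).toFinset := by
      ext e
      simp [eAt, List.mem_toFinset, List.mem_filter]
    rw [hset, List.toFinset_card_of_nodup (hnodupP.filter _), List.countP_eq_length_filter]
  rw [h1, ← hperm.countP_eq]
  exact cycle_countP _ hqc

/-- minimality : a nonempty even subgraph of a Hamiltonian cycle is the whole cycle -/
lemma cycle_minimal {v : V} {p : G.Walk v v} (hp : p.IsHamiltonianCycle)
    {S : Finset (Sym2 V)} (hS : S ⊆ p.edges.toFinset) (hne : S.Nonempty)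
    (heven : ∀ w, (eAt S w).card = 0 ∨ (eAt S w).card = 2) :
    S = p.edges.toFinset := by
  set C := p.edges.toFinset with hC
  have hCcard : ∀ w, (eAt C w).card = 2 := fun w => cycle_two_edges hp w
  have hstep1 : ∀ w, (∃ e ∈ S, w ∈ e) → eAt C w ⊆ S := by
    rintro w ⟨e, heS, hwe⟩
    have h1 : eAt S w ⊆ eAt C w := Finset.filter_subset_filter _ hS
    have h2 : (eAt S w).card = 2 := by
      rcases heven w with h | h
      · exfalso
        rw [Finset.card_eq_zero] at h
        exact Finset.notMem_empty e (h ▸ mem_eAt.2 ⟨heS, hwe⟩)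
      · exact h
    have heq := Finset.eq_of_subset_of_card_le h1 (by rw [h2, hCcard w])
    intro e' he'
    have : e' ∈ eAt S w := heq ▸ he'
    exact (mem_eAt.1 this).1
  have hprop : ∀ {a b : V} (q : G.Walk a b), (∀ e ∈ q.edges, e ∈ C) →
      (∃ e ∈ S, a ∈ e) → (∃ e ∈ S, b ∈ e) := by
    intro a b q
    induction q with
    | nil => exact fun _ h => h
    | @cons a' b' c' hadj q' IH =>
      intro hsub hPa
      refine IH (fun e he => hsub e (by rw [Walk.edges_cons]; exact List.mem_cons_of_mem _ he)) ?_
      have hfirst : s(a', b') ∈ C := hsub _ (by rw [Walk.edges_cons]; exact List.mem_cons_self)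
      have hmem : s(a', b') ∈ eAt C a' := mem_eAt.2 ⟨hfirst, by simp⟩
      exact ⟨s(a', b'), hstep1 a' hPa hmem, by simp⟩
  obtain ⟨e0, he0⟩ := hne
  have ha0 : e0.out.1 ∈ e0 := Sym2.out_fst_mem e0
  set a0 := e0.out.1
  have hPall : ∀ w, ∃ e ∈ S, w ∈ e := by
    intro w
    have ha0sup : a0 ∈ p.support := hp.mem_support a0
    have hwsup : w ∈ (p.rotate a0 ha0sup).support := by
      have h1 : w ∈ p.support.tail := by
        rw [← Walk.support_tail_of_not_nil p hp.isCycle.not_nil]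
        exact hp.isHamiltonian_tail.mem_support w
      have h2 := (Walk.support_rotate p a0 ha0sup).mem_iff.2 h1
      exact List.mem_of_mem_tail h2
    refine hprop ((p.rotate a0 ha0sup).takeUntil w hwsup) ?_ ⟨e0, he0, ha0⟩
    intro e he
    have h1 : e ∈ (p.rotate a0 ha0sup).edges := Walk.edges_takeUntil_subset _ hwsup he
    have h2 : e ∈ p.edges := (p.rotate_edges a0 ha0sup).mem_iff.1 h1
    exact List.mem_toFinset.2 h2
  apply Finset.Subset.antisymm hS
  intro e heC
  have ht : e.out.1 ∈ e := Sym2.out_fst_mem e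
  exact hstep1 e.out.1 (hPall e.out.1) (mem_eAt.2 ⟨heC, ht⟩)

end
end Stmt12

open Finset
namespace Stmt12
attribute [local instance] Classical.propDecidable
set_option linter.unusedSectionVars false
set_option linter.unusedVariables false
set_option maxHeartbeats 16000000
noncomputable section
variable {V : Type*} [Fintype V] [DecidableEq V]
variable {E F X : Finset (Sym2 V)} {u : ℕ}

lemma one_le_bbpow (u : ℕ) : (1:ℝ) ≤ bb ^ u := by
  calc (1:ℝ) = 1 ^ u := (one_pow u).symm
    _ ≤ bb ^ u := pow_le_pow_left₀ (by norm_num) one_le_bb u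

lemma sym2_exists_mem (e : Sym2 V) : ∃ v, v ∈ e := by
  induction e using Sym2.ind with
  | _ x y => exact ⟨x, by simp⟩

/-- the initial 3-way branching when no edge is forced -/
lemma branch_free (IH : IHtype E u) (hu : (E \ (F ∪ X)).card ≤ u)
    (hF0 : F = ∅) {v0 : V} {g1 : Sym2 V}
    (h3 : (avail E X v0).card = 3) (hg1av : g1 ∈ avail E X v0) :
    ((Fam E F X).card : ℝ) ≤ 3 * bb ^ u := by
  obtain ⟨g2, g3, hg23, hg21, hg31, hg2av, hg3av, hav⟩ := avail3_structure1 h3 hg1av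
  obtain ⟨hg1E, hg1X, hv0g1⟩ := mem_avail.1 hg1av
  obtain ⟨hg2E, hg2X, hv0g2⟩ := mem_avail.1 hg2av
  obtain ⟨hg3E, hg3X, hv0g3⟩ := mem_avail.1 hg3av
  have hgF : ∀ g : Sym2 V, g ∉ F := by rw [hF0]; intro g; exact Finset.notMem_empty g
  have hpoint : ∀ C ∈ Fam E F X,
      C ∈ Fam E (F ∪ {g2, g3}) (X ∪ {g1}) ∨
      C ∈ Fam E (F ∪ {g1, g2}) (X ∪ {g3}) ∨
      C ∈ Fam E (F ∪ {g1, g3}) (X ∪ {g2}) := by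
    intro C hC
    obtain ⟨hgood, hFC, hXC⟩ := mem_Fam.1 hC
    by_cases hg1C : g1 ∈ C
    · rcases split_pair hgood hXC (le_of_eq hav) hg1C hv0g1 hv0g2 hv0g3
        (Ne.symm hg21) (Ne.symm hg31) hg23 with ⟨h2C, h3C⟩ | ⟨h3C, h2C⟩
      · right; left
        refine mem_Fam.2 ⟨hgood, forced_aug hFC ?_, disjoint_aug hXC ?_⟩
        · intro e he; simp only [Finset.mem_insert, Finset.mem_singleton] at he
          rcases he with rfl | rfl <;> assumption
        · intro e he; rw [Finset.mem_singleton] at he; subst he; assumption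
      · right; right
        refine mem_Fam.2 ⟨hgood, forced_aug hFC ?_, disjoint_aug hXC ?_⟩
        · intro e he; simp only [Finset.mem_insert, Finset.mem_singleton] at he
          rcases he with rfl | rfl <;> assumption
        · intro e he; rw [Finset.mem_singleton] at he; subst he; assumption
    · left
      have hsub : avail E X v0 ⊆ {g2, g3, g1} := by
        rw [hav]; intro e he; simp only [Finset.mem_insert, Finset.mem_singleton] at he ⊢
        tauto
      obtain ⟨h2C, h3C⟩ := force_pair hgood hXC hsub hg1C
      refine mem_Fam.2 ⟨hgood, forced_aug hFC ?_, disjoint_aug hXC ?_⟩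
      · intro e he; simp only [Finset.mem_insert, Finset.mem_singleton] at he
        rcases he with rfl | rfl <;> assumption
      · intro e he; rw [Finset.mem_singleton] at he; subst he; assumption
  have hstep : ∀ (a b c : Sym2 V), a ∈ E → a ∉ X →
      ((Fam E (F ∪ {b, c}) (X ∪ {a})).card : ℝ) ≤ bb ^ (u - 1) := by
    intro a b c haE haX
    refine step_bound (d := 1) (D := {a}) IH hu ?_ ?_ ?_ (by simp) (by norm_num) ⟨b, by simp⟩
    · intro e he; rw [Finset.mem_singleton] at he; rw [he]
      rw [Finset.mem_sdiff, Finset.mem_union]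
      exact ⟨haE, by simp [hgF a, haX]⟩
    · intro e he; rw [Finset.mem_singleton] at he; rw [he]
      rw [Finset.mem_union, Finset.mem_union]; simp
    · intro e he; rw [Finset.mem_union] at he
      rw [Finset.mem_union, Finset.mem_union, Finset.mem_union]
      tauto
  have h1u : 1 ≤ u := by
    have h1 : g1 ∈ E \ (F ∪ X) := by
      rw [Finset.mem_sdiff, Finset.mem_union]
      exact ⟨hg1E, by simp [hgF g1, hg1X]⟩
    have := Finset.card_pos.2 ⟨g1, h1⟩
    omega
  have hsplit := Fam_split3 hpoint
  calc ((Fam E F X).card : ℝ)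
      ≤ ((Fam E (F ∪ {g2, g3}) (X ∪ {g1})).card : ℝ)
        + ((Fam E (F ∪ {g1, g2}) (X ∪ {g3})).card : ℝ)
        + ((Fam E (F ∪ {g1, g3}) (X ∪ {g2})).card : ℝ) := by exact_mod_cast hsplit
    _ ≤ bb ^ (u-1) + bb ^ (u-1) + bb ^ (u-1) :=
        add_le_add (add_le_add (hstep g1 g2 g3 hg1E hg1X) (hstep g3 g1 g2 hg3E hg3X))
          (hstep g2 g1 g3 hg2E hg2X)
    _ = 3 * bb ^ (u-1) := by ring
    _ ≤ 3 * bb ^ u := by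
        have := bb_mono (Nat.sub_le u 1)
        nlinarith [pow_nonneg bb_pos.le (u-1)]

theorem master (hE : ∀ e ∈ E, ¬ e.IsDiag) (hdeg : ∀ v, (eAt E v).card ≤ 3) :
    ∀ u : ℕ, ∀ F X : Finset (Sym2 V), (E \ (F ∪ X)).card ≤ u →
      ((Fam E F X).card : ℝ) ≤ (if F = ∅ then (3:ℝ) else 1) * bb ^ u := by
  intro u
  induction u using Nat.strong_induction_on with
  | _ u IH' =>
  intro F X hu
  have IH : IHtype E u := fun u' hu' F' X' h => IH' u' hu' F' X' h
  have hcoef : (1:ℝ) ≤ (if F = ∅ then (3:ℝ) else 1) := by split_ifs <;> norm_num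
  have htail : ∀ x : ℝ, x ≤ bb ^ u → x ≤ (if F = ∅ then (3:ℝ) else 1) * bb ^ u :=
    fun x hx => hx.trans (le_mul_of_one_le_left (pow_nonneg bb_pos.le u) hcoef)
  by_cases hne : (Fam E F X).Nonempty
  swap
  · rw [Finset.not_nonempty_iff_eq_empty] at hne
    rw [hne]
    simp only [Finset.card_empty, Nat.cast_zero]
    exact mul_nonneg (by positivity) (pow_nonneg bb_pos.le u)
  obtain ⟨C0, hC0mem⟩ := hne
  obtain ⟨hg0, hF0sub, hX0⟩ := mem_Fam.1 hC0mem
  have hFEX : ∀ e ∈ F, e ∈ E ∧ e ∉ X :=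
    fun e he => ⟨hg0.1 (hF0sub he), Finset.disjoint_left.1 hX0 (hF0sub he)⟩
  have h2le : ∀ w, 2 ≤ (avail E X w).card := two_le_avail hg0 hX0
  have h3ge : ∀ w, (avail E X w).card ≤ 3 :=
    fun w => le_trans (Finset.card_le_card (avail_subset_eAt X w)) (hdeg w)
  have hFsubav : ∀ w, eAt F w ⊆ avail E X w := by
    intro w e he
    rw [mem_eAt] at he
    exact mem_avail.2 ⟨(hFEX e he.1).1, (hFEX e he.1).2, he.2⟩
  -- reduction 1 : a vertex with only 2 available edges, not both forced
  by_cases hred1 : ∃ w e, (avail E X w).card = 2 ∧ e ∈ avail E X w ∧ e ∉ F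
  · obtain ⟨w, e0, hw2, he0av, he0F⟩ := hred1
    obtain ⟨a, b, hab, havw⟩ := Finset.card_eq_two.1 hw2
    have hforce : ∀ C ∈ Fam E F X, C ∈ Fam E (F ∪ {a, b}) X := by
      intro C hC
      obtain ⟨hgood, hFC, hXC⟩ := mem_Fam.1 hC
      obtain ⟨haC, hbC⟩ := force_pair' hgood hXC (le_of_eq havw)
      refine mem_Fam.2 ⟨hgood, forced_aug hFC ?_, hXC⟩
      intro e he; simp only [Finset.mem_insert, Finset.mem_singleton] at he
      rcases he with rfl | rfl <;> assumption
    obtain ⟨he0E, he0X, _⟩ := mem_avail.1 he0av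
    have hstep := step_bound (d := 1) (D := {e0}) (F' := F ∪ {a, b}) (X' := X) IH hu
      (by intro e he; rw [Finset.mem_singleton] at he; rw [he]
          rw [Finset.mem_sdiff, Finset.mem_union]
          exact ⟨he0E, by simp [he0F, he0X]⟩)
      (by intro e he; rw [Finset.mem_singleton] at he; rw [he]
          rw [Finset.mem_union]
          left
          rw [Finset.mem_union]
          right
          have : e0 ∈ ({a, b} : Finset (Sym2 V)) := havw ▸ he0av
          exact this)
      (by intro e he; rw [Finset.mem_union] at he
          rw [Finset.mem_union, Finset.mem_union]
          tauto)
      (by simp) (by norm_num) ⟨a, by simp⟩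
    refine htail _ ?_
    calc ((Fam E F X).card : ℝ) ≤ ((Fam E (F ∪ {a, b}) X).card : ℝ) := by
          exact_mod_cast Fam_mono hforce
      _ ≤ bb ^ (u - 1) := hstep
      _ ≤ bb ^ u := bb_mono (Nat.sub_le u 1)
  -- reduction 2 : a vertex with 2 forced edges and a third available edge
  by_cases hred2 : ∃ w, (eAt F w).card = 2 ∧ (avail E X w \ eAt F w).Nonempty
  · obtain ⟨w, hw2, e0, he0⟩ := hred2
    obtain ⟨a, b, hab, hFw⟩ := Finset.card_eq_two.1 hw2
    have haF : a ∈ F ∧ w ∈ a := by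
      have : a ∈ eAt F w := by rw [hFw]; simp
      exact mem_eAt.1 this
    have hbF : b ∈ F ∧ w ∈ b := by
      have : b ∈ eAt F w := by rw [hFw]; simp
      exact mem_eAt.1 this
    have hforce : ∀ C ∈ Fam E F X, C ∈ Fam E F (X ∪ (avail E X w \ eAt F w)) := by
      intro C hC
      obtain ⟨hgood, hFC, hXC⟩ := mem_Fam.1 hC
      refine mem_Fam.2 ⟨hgood, hFC, disjoint_aug hXC ?_⟩
      intro e he
      rw [Finset.mem_sdiff] at he
      have hwe : w ∈ e := (mem_avail.1 he.1).2.2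
      have hea : e ≠ a := fun h => he.2 (by rw [hFw]; simp [h])
      have heb : e ≠ b := fun h => he.2 (by rw [hFw]; simp [h])
      exact exclude_third hgood (hFC haF.1) (hFC hbF.1) hab haF.2 hbF.2 hwe hea heb
    rw [Finset.mem_sdiff] at he0
    obtain ⟨he0E, he0X, hwe0⟩ := mem_avail.1 he0.1
    have he0F : e0 ∉ F := fun h => he0.2 (mem_eAt.2 ⟨h, hwe0⟩)
    have hstep := step_bound (d := 1) (D := {e0}) (F' := F) (X' := X ∪ (avail E X w \ eAt F w))
      IH hu
      (by intro e he; rw [Finset.mem_singleton] at he; rw [he]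
          rw [Finset.mem_sdiff, Finset.mem_union]
          exact ⟨he0E, by simp [he0F, he0X]⟩)
      (by intro e he; rw [Finset.mem_singleton] at he; rw [he]
          rw [Finset.mem_union, Finset.mem_union]
          right; right
          exact Finset.mem_sdiff.2 he0)
      (by intro e he; rw [Finset.mem_union] at he
          rw [Finset.mem_union, Finset.mem_union]
          tauto)
      (by simp) (by norm_num) ⟨a, haF.1⟩
    refine htail _ ?_
    calc ((Fam E F X).card : ℝ)
        ≤ ((Fam E F (X ∪ (avail E X w \ eAt F w))).card : ℝ) := by
          exact_mod_cast Fam_mono hforce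
      _ ≤ bb ^ (u - 1) := hstep
      _ ≤ bb ^ u := bb_mono (Nat.sub_le u 1)
  -- classification of vertices
  push_neg at hred1 hred2
  have hclass : ∀ w, TA E F X w ∨ TB0 E F X w ∨ TB1 E F X w := by
    intro w
    have h2 := h2le w
    have h3 := h3ge w
    rcases Nat.lt_or_ge (avail E X w).card 3 with hlt | hge
    · left
      have hc2 : (avail E X w).card = 2 := by omega
      refine ⟨hc2, fun e he => ?_⟩
      by_contra heF
      exact heF (hred1 w e hc2 he)
    · have hc3 : (avail E X w).card = 3 := by omega
      have hFle : (eAt F w).card ≤ (eAt C0 w).card := by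
        apply Finset.card_le_card
        intro e he
        rw [mem_eAt] at he ⊢
        exact ⟨hF0sub he.1, he.2⟩
      rw [hg0.2.1 w] at hFle
      rcases Nat.lt_or_ge (eAt F w).card 2 with hlt2 | hge2
      · rcases Nat.lt_or_ge (eAt F w).card 1 with hlt1 | hge1
        · right; left
          exact ⟨hc3, Finset.card_eq_zero.1 (by omega)⟩
        · right; right
          exact ⟨hc3, by omega⟩
      · exfalso
        have hc2' : (eAt F w).card = 2 := by omega
        refine Finset.nonempty_iff_ne_empty.1 ?_ (hred2 w hc2')
        have hlt : (eAt F w).card < (avail E X w).card := by omega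
        obtain ⟨e, hea, hef⟩ := Finset.exists_of_ssubset ⟨hFsubav w, fun h =>
          absurd (Finset.card_le_card h) (by omega)⟩
        exact ⟨e, Finset.mem_sdiff.2 ⟨hea, hef⟩⟩
  -- is there a b1 vertex?
  by_cases hb1 : ∃ w, TB1 E F X w
  · obtain ⟨v, hv1⟩ := hb1
    obtain ⟨f, hFv⟩ := Finset.card_eq_one.1 hv1.2
    have hfF : f ∈ F := (mem_eAt.1 (by rw [hFv]; exact Finset.mem_singleton_self f)).1
    have hvf : v ∈ f := (mem_eAt.1 (by rw [hFv]; exact Finset.mem_singleton_self f)).2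
    have hfav : f ∈ avail E X v := mem_avail.2 ⟨(hFEX f hfF).1, (hFEX f hfF).2, hvf⟩
    obtain ⟨e1, e2, he12, he1f, he2f, he1av, he2av, hav⟩ := avail3_structure1 hv1.1 hfav
    obtain ⟨he1E, he1X, hve1⟩ := mem_avail.1 he1av
    obtain ⟨he2E, he2X, hve2⟩ := mem_avail.1 he2av
    have he1F : e1 ∉ F := fun h => he1f (by
      have : e1 ∈ eAt F v := mem_eAt.2 ⟨h, hve1⟩
      rwa [hFv, Finset.mem_singleton] at this)
    have he2F : e2 ∉ F := fun h => he2f (by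
      have : e2 ∈ eAt F v := mem_eAt.2 ⟨h, hve2⟩
      rwa [hFv, Finset.mem_singleton] at this)
    obtain ⟨w1, hw1v, he1⟩ := other_endpoint hE he1E hve1
    obtain ⟨w2, hw2v, he2⟩ := other_endpoint hE he2E hve2
    have hw1e1 : w1 ∈ e1 := by rw [he1]; simp
    have hw2e2 : w2 ∈ e2 := by rw [he2]; simp
    have hw12 : w1 ≠ w2 := by
      intro h
      apply he12
      rw [he1, he2, h]
    have hty : ∀ w e, e = s(v, w) → e ∈ E → e ∉ X → e ∉ F → w ∈ e →
        TB0 E F X w ∨ TB1 E F X w := by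
      intro w e hef heE heX heF hwe
      rcases hclass w with hw | hw | hw
      · exact absurd (hw.2 (mem_avail.2 ⟨heE, heX, hwe⟩)) heF
      · exact Or.inl hw
      · exact Or.inr hw
    have hty1 := hty w1 e1 he1 he1E he1X he1F hw1e1
    have hty2 := hty w2 e2 he2 he2E he2X he2F hw2e2
    refine htail _ ?_
    rcases hty1 with hw1t | hw1t <;> rcases hty2 with hw2t | hw2t
    · exact branch_00 hE IH hu hFEX hFv hav he1f he2f he12 he1 he2 hw1v hw2v hw12 hw1t hw2t
    · exact branch_asym hE IH hu hFEX hclass hFv hav he1f he2f he12 he1 he2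
        hw1v hw2v hw12 hw1t hw2t
    · refine branch_asym hE IH hu hFEX hclass hFv ?_ he2f he1f (Ne.symm he12) he2 he1
        hw2v hw1v (Ne.symm hw12) hw2t hw1t
      rw [hav, Finset.pair_comm e1 e2]
    · exact branch_bb hE IH hu hFEX hFv hav he1f he2f he12 he1 he2 hw1v hw2v hw12 hw1t hw2t
  -- no b1 vertex
  by_cases hFe : F = ∅
  · -- free case : coefficient 3
    rw [if_pos hFe]
    by_cases hEX : ∃ e, e ∈ E \ (F ∪ X)
    · obtain ⟨e0, he0⟩ := hEX
      rw [Finset.mem_sdiff, Finset.mem_union] at he0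
      push_neg at he0
      obtain ⟨v0, hv0⟩ := sym2_exists_mem e0
      have he0av : e0 ∈ avail E X v0 := mem_avail.2 ⟨he0.1, he0.2.2, hv0⟩
      have hv0B0 : TB0 E F X v0 := by
        rcases hclass v0 with hw | hw | hw
        · exact absurd (hw.2 he0av) he0.2.1
        · exact hw
        · exfalso; exact hb1 ⟨v0, hw⟩
      exact branch_free IH hu hFe hv0B0.1 he0av
    · -- no unresolved edges at all : at most one cycle
      push_neg at hEX
      have hsub : Fam E F X ⊆ {C0} := by
        intro C hC
        obtain ⟨hgood, hFC, hXC⟩ := mem_Fam.1 hC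
        have hCeq : ∀ C' : Finset (Sym2 V), good E C' → F ⊆ C' → Disjoint C' X →
            C' ⊆ F ∪ X := by
          intro C' hg hF hX e he
          by_contra hmem
          exact (Finset.mem_sdiff.2 ⟨hg.1 he, hmem⟩ : e ∈ E \ (F ∪ X)) |> hEX e
        have h1 : C ⊆ F ∪ X := hCeq C hgood hFC hXC
        have h2 : C0 ⊆ F ∪ X := hCeq C0 hg0 hF0sub hX0
        have hCF : C = F := by
          apply Finset.Subset.antisymm ?_ hFC
          intro e he
          rcases Finset.mem_union.1 (h1 he) with h | h
          · exact h
          · exact absurd h (Finset.disjoint_left.1 hXC he)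
        have hC0F : C0 = F := by
          apply Finset.Subset.antisymm ?_ hF0sub
          intro e he
          rcases Finset.mem_union.1 (h2 he) with h | h
          · exact h
          · exact absurd h (Finset.disjoint_left.1 hX0 he)
        rw [Finset.mem_singleton, hCF, hC0F]
      have : (Fam E F X).card ≤ 1 := le_trans (Finset.card_le_card hsub) (by simp)
      calc ((Fam E F X).card : ℝ) ≤ 1 := by exact_mod_cast this
        _ ≤ 3 * bb ^ u := by nlinarith [one_le_bbpow u]
  · -- F nonempty, no b1 vertex
    obtain ⟨f0, hf0F⟩ := Finset.nonempty_iff_ne_empty.2 hFe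
    push_neg at hb1
    have hTAforced : ∀ w, (eAt F w).Nonempty → TA E F X w := by
      intro w ⟨e, he⟩
      rcases hclass w with hw | hw | hw
      · exact hw
      · rw [hw.2] at he
        exact absurd he (Finset.notMem_empty e)
      · exact absurd hw (hb1 w)
    by_cases hB0 : ∃ w, TB0 E F X w
    · -- impossible : the forced part would be a complete cycle missing some vertex
      exfalso
      obtain ⟨w0, hw0⟩ := hB0
      set S : Finset (Sym2 V) := C0.filter (fun e => ∃ t, t ∈ e ∧ TA E F X t) with hS
      have hSsub : S ⊆ C0 := Finset.filter_subset _ _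
      have hSne : S.Nonempty := by
        obtain ⟨t0, ht0⟩ := sym2_exists_mem f0
        refine ⟨f0, Finset.mem_filter.2 ⟨hF0sub hf0F, t0, ht0, ?_⟩⟩
        exact hTAforced t0 ⟨f0, mem_eAt.2 ⟨hf0F, ht0⟩⟩
      have hSeven : ∀ w, (eAt S w).card = 0 ∨ (eAt S w).card = 2 := by
        intro w
        rcases hclass w with hw | hw | hw
        · right
          have : eAt S w = eAt C0 w := by
            ext e
            rw [mem_eAt, mem_eAt]
            constructor
            · rintro ⟨heS, hwe⟩; exact ⟨hSsub heS, hwe⟩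
            · rintro ⟨heC, hwe⟩
              exact ⟨Finset.mem_filter.2 ⟨heC, w, hwe, hw⟩, hwe⟩
          rw [this, hg0.2.1 w]
        · left
          rw [Finset.card_eq_zero, Finset.eq_empty_iff_forall_notMem]
          intro e he
          rw [mem_eAt] at he
          obtain ⟨heS, hwe⟩ := he
          obtain ⟨heC0, t, hte, htTA⟩ := Finset.mem_filter.1 heS
          have heav : e ∈ avail E X t :=
            mem_avail.2 ⟨hg0.1 heC0, Finset.disjoint_left.1 hX0 heC0, hte⟩
          have heF : e ∈ F := htTA.2 heav
          have : e ∈ eAt F w := mem_eAt.2 ⟨heF, hwe⟩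
          rw [hw.2] at this
          exact Finset.notMem_empty e this
        · exact absurd hw (hb1 w)
      have hSC0 := hg0.2.2 S hSsub hSne hSeven
      have h2 : (eAt S w0).card = 2 := by
        rw [hSC0]; exact hg0.2.1 w0
      rcases hSeven w0 with h | h
      · rw [hSC0] at h
        rw [hg0.2.1 w0] at h
        omega
      · -- need contradiction : at w0 (TB0) S should have no edges
        have : (eAt S w0).card = 0 := by
          rw [Finset.card_eq_zero, Finset.eq_empty_iff_forall_notMem]
          intro e he
          rw [mem_eAt] at he
          obtain ⟨heS, hwe⟩ := he
          obtain ⟨heC0, t, hte, htTA⟩ := Finset.mem_filter.1 heS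
          have heav : e ∈ avail E X t :=
            mem_avail.2 ⟨hg0.1 heC0, Finset.disjoint_left.1 hX0 heC0, hte⟩
          have heF : e ∈ F := htTA.2 heav
          have : e ∈ eAt F w0 := mem_eAt.2 ⟨heF, hwe⟩
          rw [hw0.2] at this
          exact Finset.notMem_empty e this
        omega
    · -- all vertices are type A : C = F is forced
      push_neg at hB0
      have hallTA : ∀ w, TA E F X w := by
        intro w
        rcases hclass w with hw | hw | hw
        · exact hw
        · exact absurd hw (hB0 w)
        · exact absurd hw (hb1 w)
      have hsub : Fam E F X ⊆ {F} := by
        intro C hC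
        obtain ⟨hgood, hFC, hXC⟩ := mem_Fam.1 hC
        rw [Finset.mem_singleton]
        apply Finset.Subset.antisymm ?_ hFC
        intro e he
        obtain ⟨t, ht⟩ := sym2_exists_mem e
        have : e ∈ avail E X t :=
          mem_avail.2 ⟨hgood.1 he, Finset.disjoint_left.1 hXC he, ht⟩
        exact (hallTA t).2 this
      have hcard : (Fam E F X).card ≤ 1 := le_trans (Finset.card_le_card hsub) (by simp)
      refine htail _ ?_
      calc ((Fam E F X).card : ℝ) ≤ 1 := by exact_mod_cast hcard
        _ ≤ bb ^ u := one_le_bbpow u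

end
end Stmt12

/-- `IsHamCycleSet G C` : `C` is the edge set of some Hamiltonian cycle of `G`. -/
def IsHamCycleSet {V : Type*} [DecidableEq V] (G : SimpleGraph V) (C : Set (Sym2 V)) : Prop :=
  ∃ (v : V) (p : G.Walk v v), p.IsHamiltonianCycle ∧ C = {e | e ∈ p.edges}

namespace Stmt12
attribute [local instance] Classical.propDecidable
set_option linter.unusedSectionVars false
set_option maxHeartbeats 1600000

open Finset

theorem final_bound {n : ℕ} (G : SimpleGraph (Fin n)) (F : Set (Sym2 (Fin n)))
    (hFE : F ⊆ G.edgeSet) (hdeg3 : ∀ v, (G.neighborSet v).ncard ≤ 3) :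
    ({C : Set (Sym2 (Fin n)) | IsHamCycleSet G C ∧ F ⊆ C}.ncard : ℝ)
      ≤ 2 ^ (((G.edgeSet \ F).ncard : ℝ) / 4) * 3 := by
  classical
  set E' : Finset (Sym2 (Fin n)) := (Set.toFinite G.edgeSet).toFinset with hE'
  set F' : Finset (Sym2 (Fin n)) := (Set.toFinite F).toFinset with hF'
  have hE'mem : ∀ e, e ∈ E' ↔ e ∈ G.edgeSet := fun e => Set.Finite.mem_toFinset _
  have hF'mem : ∀ e, e ∈ F' ↔ e ∈ F := fun e => Set.Finite.mem_toFinset _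
  have hE'diag : ∀ e ∈ E', ¬ e.IsDiag :=
    fun e he => G.not_isDiag_of_mem_edgeSet ((hE'mem e).1 he)
  have hdeg' : ∀ v, (eAt E' v).card ≤ 3 := by
    intro v
    set N : Finset (Fin n) := (Set.toFinite (G.neighborSet v)).toFinset with hN
    have hNcard : N.card ≤ 3 := by
      have := hdeg3 v
      rwa [Set.ncard_eq_toFinset_card _ (Set.toFinite _)] at this
    have hsub : eAt E' v ⊆ N.image (fun w => s(v, w)) := by
      intro e he
      rw [mem_eAt] at he
      obtain ⟨w, hwv, hew⟩ := other_endpoint hE'diag he.1 he.2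
      rw [Finset.mem_image]
      refine ⟨w, ?_, hew.symm⟩
      rw [Set.Finite.mem_toFinset]
      have : e ∈ G.edgeSet := (hE'mem e).1 he.1
      rw [hew, SimpleGraph.mem_edgeSet] at this
      exact this
    calc (eAt E' v).card ≤ (N.image (fun w => s(v, w))).card := Finset.card_le_card hsub
      _ ≤ N.card := Finset.card_image_le
      _ ≤ 3 := hNcard
  set S : Set (Set (Sym2 (Fin n))) := {C | IsHamCycleSet G C ∧ F ⊆ C} with hSdef
  set Φ : Set (Sym2 (Fin n)) → Finset (Sym2 (Fin n)) := fun C => (Set.toFinite C).toFinset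
    with hΦ
  have hΦinj : Function.Injective Φ := by
    intro A B h
    have : (Set.toFinite A).toFinset = (Set.toFinite B).toFinset := h
    rwa [Set.Finite.toFinset_inj] at this
  have hmap : ∀ C ∈ S, Φ C ∈ Fam E' F' ∅ := by
    rintro C ⟨⟨v, p, hp, rfl⟩, hFC⟩
    have hΦC : Φ {e | e ∈ p.edges} = p.edges.toFinset := by
      show (Set.toFinite {e | e ∈ p.edges}).toFinset = p.edges.toFinset
      ext e
      rw [Set.Finite.mem_toFinset, List.mem_toFinset]
      exact Iff.rfl
    rw [mem_Fam, hΦC]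
    refine ⟨⟨?_, ?_, ?_⟩, ?_, Finset.disjoint_empty_right _⟩
    · intro e he
      rw [List.mem_toFinset] at he
      rw [hE'mem]
      exact p.edges_subset_edgeSet he
    · exact fun w => cycle_two_edges hp w
    · exact fun Ssub hsub hne heven => cycle_minimal hp hsub hne heven
    · intro e he
      rw [List.mem_toFinset]
      have : e ∈ F := (hF'mem e).1 he
      exact hFC this
  have hcount : (S.ncard : ℝ) ≤ ((Fam E' F' ∅).card : ℝ) := by
    have h1 : S.ncard = (Φ '' S).ncard := (Set.ncard_image_of_injective S hΦinj).symm
    have h2 : (Φ '' S) ⊆ ↑(Fam E' F' ∅) := by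
      rintro _ ⟨C, hC, rfl⟩
      exact hmap C hC
    have h3 : (Φ '' S).ncard ≤ (↑(Fam E' F' ∅) : Set (Finset (Sym2 (Fin n)))).ncard :=
      Set.ncard_le_ncard h2 (Finset.finite_toSet _)
    rw [Set.ncard_coe_finset] at h3
    exact_mod_cast h1 ▸ h3
  set u0 : ℕ := (E' \ (F' ∪ ∅)).card with hu0
  have hmaster := master hE'diag hdeg' u0 F' ∅ le_rfl
  have hcoef : (if F' = ∅ then (3:ℝ) else 1) ≤ 3 := by split_ifs <;> norm_num
  have hbound : ((Fam E' F' ∅).card : ℝ) ≤ bb ^ u0 * 3 := by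
    calc ((Fam E' F' ∅).card : ℝ) ≤ (if F' = ∅ then (3:ℝ) else 1) * bb ^ u0 := hmaster
      _ ≤ 3 * bb ^ u0 := by
          have := one_le_bbpow u0
          nlinarith [pow_nonneg bb_pos.le u0]
      _ = bb ^ u0 * 3 := by ring
  have hueq : ((G.edgeSet \ F).ncard : ℕ) = u0 := by
    rw [hu0]
    rw [Finset.union_empty]
    rw [← Set.ncard_coe_finset (E' \ F')]
    congr 1
    ext e
    simp only [Finset.coe_sdiff, Set.mem_diff, Finset.mem_coe]
    rw [hE'mem, hF'mem]
  have hpow : bb ^ u0 = (2:ℝ) ^ (((G.edgeSet \ F).ncard : ℝ) / 4) := by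
    rw [bb]
    rw [← Real.rpow_natCast ((2:ℝ) ^ ((4:ℝ)⁻¹)) u0]
    rw [← Real.rpow_mul (by norm_num : (0:ℝ) ≤ 2)]
    congr 1
    rw [← hueq]
    push_cast
    ring
  calc (S.ncard : ℝ) ≤ ((Fam E' F' ∅).card : ℝ) := hcount
    _ ≤ bb ^ u0 * 3 := hbound
    _ = 2 ^ (((G.edgeSet \ F).ncard : ℝ) / 4) * 3 := by rw [hpow]

end Stmt12

theorem stmt_12 :
    ∃ c : ℝ, ∀ (n : ℕ) (G : SimpleGraph (Fin n)) (F : Set (Sym2 (Fin n))),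
      F ⊆ G.edgeSet →
      (∀ v, (G.neighborSet v).ncard ≤ 3) →
      ({C : Set (Sym2 (Fin n)) | IsHamCycleSet G C ∧ F ⊆ C}.ncard : ℝ)
        ≤ 2 ^ (((G.edgeSet \ F).ncard : ℝ) / 4) * c := by
  exact ⟨3, fun n G F hFE hdeg => Stmt12.final_bound G F hFE hdeg⟩
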